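/- arXiv:2605.29431 — 12 statements merged into one kernel-verified Lean document; each statement's English description precedes it below -/
import Mathlib

section
/- Let a,b be positive integers, g = gcd(a,b), ℓ = lcm(a,b), and let Row(x,y) = ((x-1) mod a, (y-1) mod b) act on {0,…,a-1}×{0,…,b-1}. Define ddeg(x,y) = 2 - [x=0] - [y=0] (Iverson brackets). Then for every orbit O of Row, the sum of ddeg over the elements of O equals (2ab - a - b)/g. -/
/-- Counting naturals below `a*m` whose residue mod `a` is a given `c : ZMod a`. -/
lemma count_cast_aux (a : ℕ) (ha : 0 < a) (m : ℕ) (c : ZMod a) :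
    ((Finset.range (a * m)).filter (fun k : ℕ => ((k : ZMod a) = c))).card = m := by
  haveI : NeZero a := ⟨ha.ne'⟩
  rw [eq_comm]
  nth_rewrite 1 [← Finset.card_range m]
  apply Finset.card_bij (fun j _ => c.val + a * j)
  · intro j hj
    simp only [Finset.mem_filter, Finset.mem_range] at *
    have hc : c.val < a := ZMod.val_lt c
    constructor
    · have : a * (j + 1) ≤ a * m := Nat.mul_le_mul_left a hj
      nlinarith
    · push_cast
      simp [ZMod.natCast_val, ZMod.cast_id]
  · intro j1 _ j2 _ h
    have : a * j1 = a * j2 := by omega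
    exact Nat.eq_of_mul_eq_mul_left ha this
  · intro k hk
    simp only [Finset.mem_filter, Finset.mem_range] at hk
    have hc : c.val = k % a := by rw [← hk.2, ZMod.val_natCast]
    refine ⟨k / a, Finset.mem_range.2 ?_, ?_⟩
    · exact Nat.div_lt_of_lt_mul (by omega)
    · rw [hc]
      exact (Nat.mod_add_div k a)

lemma sum_ite_zero_one_aux {p : ℕ → Prop} [DecidablePred p] (s : Finset ℕ) :
    ∑ k ∈ s, (if p k then (0:ℕ) else 1) = s.card - (s.filter p).card := by
  have h := Finset.card_filter_add_card_filter_not (s := s) (p := p)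
  have h2 : ∑ k ∈ s, (if p k then (0:ℕ) else 1)
      = (s.filter (fun k => ¬ p k)).card := by
    rw [Finset.card_filter]
    exact Finset.sum_congr rfl (fun k _ => by split_ifs <;> simp_all)
  omega

/-- The down-degree statistic `ddeg(x,y) = 2 - [x=0] - [y=0]` sums to
`(2ab - a - b)/gcd(a,b)` over every rowmotion orbit of `C_a × C_b`. -/
theorem stmt_1 (a b : ℕ) (ha : 0 < a) (hb : 0 < b) :
    let Row : ZMod a × ZMod b → ZMod a × ZMod b := fun z => (z.1 - 1, z.2 - 1)
    let ddeg : ZMod a × ZMod b → ℕ := fun z =>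
      2 - (if z.1 = 0 then 1 else 0) - (if z.2 = 0 then 1 else 0)
    ∀ z : ZMod a × ZMod b,
      (∑ᶠ w ∈ ({w | ∃ k : ℕ, Row^[k] z = w} : Set (ZMod a × ZMod b)), ddeg w)
        = (2 * a * b - a - b) / Nat.gcd a b := by
  intro Row ddeg z
  set g := Nat.gcd a b with hg
  set L := Nat.lcm a b with hL
  have hgpos : 0 < g := Nat.gcd_pos_of_pos_left b ha
  have hLpos : 0 < L := Nat.pos_of_ne_zero (Nat.lcm_ne_zero ha.ne' hb.ne')
  obtain ⟨a', haa⟩ : g ∣ a := Nat.gcd_dvd_left a b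
  obtain ⟨b', hbb⟩ : g ∣ b := Nat.gcd_dvd_right a b
  have hgl : g * L = a * b := Nat.gcd_mul_lcm a b
  have hLab : L = a * b' := by
    have : g * L = g * (a * b') := by rw [hgl]; nth_rewrite 1 [hbb]; ring
    exact Nat.eq_of_mul_eq_mul_left hgpos this
  have hLba : L = b * a' := by
    have : g * L = g * (b * a') := by rw [hgl]; nth_rewrite 1 [haa]; ring
    exact Nat.eq_of_mul_eq_mul_left hgpos this
  set f : ℕ → ZMod a × ZMod b := fun k => (z.1 - (k : ZMod a), z.2 - (k : ZMod b))
    with hf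
  have hiter : ∀ k : ℕ, Row^[k] z = f k := by
    intro k
    induction k with
    | zero => simp [hf]
    | succ k ih =>
      rw [Function.iterate_succ_apply', ih]
      simp only [Row, hf, Prod.mk.injEq]
      constructor <;> push_cast <;> ring
  have hmod : ∀ {k k' : ℕ}, f k = f k' → (k ≡ k' [MOD a] ∧ k ≡ k' [MOD b]) := by
    intro k k' h
    rw [Prod.ext_iff] at h
    obtain ⟨h1, h2⟩ := h
    constructor
    · rw [← ZMod.natCast_eq_natCast_iff]
      exact sub_right_inj.mp h1
    · rw [← ZMod.natCast_eq_natCast_iff]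
      exact sub_right_inj.mp h2
  -- injectivity on range L
  have hinj : ∀ x ∈ Finset.range L, ∀ y ∈ Finset.range L, f x = f y → x = y := by
    have key : ∀ x y : ℕ, x ≤ y → y < L → f x = f y → x = y := by
      intro x y hxy hyL h
      obtain ⟨m1, m2⟩ := hmod h
      have d1 : a ∣ y - x := (Nat.modEq_iff_dvd' hxy).1 m1
      have d2 : b ∣ y - x := (Nat.modEq_iff_dvd' hxy).1 m2
      have dL : L ∣ y - x := Nat.lcm_dvd d1 d2
      have : y - x = 0 := Nat.eq_zero_of_dvd_of_lt dL (by omega)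
      omega
    intro x hx y hy h
    rw [Finset.mem_range] at hx hy
    rcases le_total x y with hle | hle
    · exact key x y hle hy h
    · exact (key y x hle hx h.symm).symm
  -- the orbit set is the image of `range L` under `f`
  have hset : ({w | ∃ k : ℕ, Row^[k] z = w} : Set (ZMod a × ZMod b))
      = ↑((Finset.range L).image f) := by
    ext w
    simp only [Set.mem_setOf_eq, Finset.coe_image, Set.mem_image, Finset.mem_coe,
      Finset.mem_range]
    constructor
    · rintro ⟨k, rfl⟩
      refine ⟨k % L, Nat.mod_lt _ hLpos, ?_⟩
      rw [hiter]
      rw [Prod.ext_iff]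
      have m1 : ((k % L : ℕ) : ZMod a) = (k : ZMod a) := by
        rw [ZMod.natCast_eq_natCast_iff]
        exact (Nat.mod_modEq k L).of_dvd (Nat.dvd_lcm_left a b)
      have m2 : ((k % L : ℕ) : ZMod b) = (k : ZMod b) := by
        rw [ZMod.natCast_eq_natCast_iff]
        exact (Nat.mod_modEq k L).of_dvd (Nat.dvd_lcm_right a b)
      simp [hf, m1, m2]
    · rintro ⟨k, _, rfl⟩
      exact ⟨k, hiter k⟩
  rw [hset, finsum_mem_coe_finset, Finset.sum_image hinj]
  -- rewrite each term
  have hterm : ∀ k : ℕ, ddeg (f k)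
      = (if (k : ZMod a) = z.1 then 0 else 1)
        + (if (k : ZMod b) = z.2 then 0 else 1) := by
    intro k
    simp only [ddeg, hf, sub_eq_zero]
    by_cases h1 : z.1 = (k : ZMod a) <;> by_cases h2 : z.2 = (k : ZMod b) <;>
      simp [h1, h2, eq_comm]
  rw [Finset.sum_congr rfl (fun k _ => hterm k), Finset.sum_add_distrib]
  rw [sum_ite_zero_one_aux, sum_ite_zero_one_aux, Finset.card_range]
  -- count the filters
  have c1 : ((Finset.range L).filter (fun k : ℕ => ((k : ZMod a) = z.1))).card = b' := by
    rw [hLab]; exact count_cast_aux a ha b' z.1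
  have c2 : ((Finset.range L).filter (fun k : ℕ => ((k : ZMod b) = z.2))).card = a' := by
    rw [hLba]; exact count_cast_aux b hb a' z.2
  rw [c1, c2]
  -- final arithmetic
  have hM : 2 * a * b - a - b = g * (2 * (a * b') - a' - b') := by
    rw [Nat.mul_sub, Nat.mul_sub]
    have e1 : g * (2 * (a * b')) = 2 * a * b := by rw [hbb]; ring
    rw [e1, ← haa, ← hbb]
  rw [hM, Nat.mul_div_cancel_left _ hgpos, ← hLab]
  have hb'L : b' ≤ L := by rw [hLab]; exact Nat.le_mul_of_pos_left b' ha
  have ha'L : a' ≤ L := by rw [hLba]; exact Nat.le_mul_of_pos_left a' hb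
  omega
end

section
/- Let a,b be positive integers and Row(x,y) = ((x-1) mod a, (y-1) mod b) act on {0,…,a-1}×{0,…,b-1}. Define peak(x,y) = 3 - [x=0] - [x=a-1] - [y=0] - [y=b-1]. Then for every orbit O of Row, the sum of peak over the elements of O equals (3ab - 2a - 2b)/gcd(a,b). -/
/-!
In the ring `ZMod a × ZMod b`, which has characteristic `lcm a b`, rowmotion is `w ↦ w - 1`, so
the orbit of `z` is `z - k` for `k < lcm a b`, each point occurring once. Along it each coordinate
runs `lcm a b / a` (resp. `lcm a b / b`) times through every residue, so each of the four
boundary indicators contributes `b / gcd a b` or `a / gcd a b`, while the constant `3`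
contributes `3 lcm a b = 3ab / gcd a b`.
-/

open Finset

section Orbit

variable {R : Type*} [AddCommGroupWithOne R]

lemma iterate_sub_one_apply (z : R) (k : ℕ) : (fun w : R => w - 1)^[k] z = z - k := by
  induction k with
  | zero => simp
  | succ k ih => rw [Function.iterate_succ_apply', ih, Nat.cast_succ, sub_sub]

variable (L : ℕ) [CharP R L] [NeZero L]

lemma setOf_iterate_sub_one_eq_image (z : R) :
    {w | ∃ k : ℕ, (fun w : R => w - 1)^[k] z = w} = (fun k : ℕ => z - k) '' Set.Iio L := by
  ext w
  simp only [iterate_sub_one_apply, Set.mem_image, Set.mem_Iio]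
  constructor
  · rintro ⟨k, rfl⟩
    exact ⟨k % L, Nat.mod_lt k (NeZero.pos L), by rw [← CharP.natCast_eq_natCast_mod R L]⟩
  · rintro ⟨k, -, rfl⟩
    exact ⟨k, rfl⟩

lemma finsum_mem_setOf_iterate_sub_one {M : Type*} [AddCommMonoid M] (f : R → M) (z : R) :
    ∑ᶠ w ∈ {w | ∃ k : ℕ, (fun w : R => w - 1)^[k] z = w}, f w = ∑ k ∈ range L, f (z - k) := by
  rw [setOf_iterate_sub_one_eq_image L, finsum_mem_image, ← coe_range, finsum_mem_coe_finset]
  exact fun j hj k hk hjk => CharP.natCast_injOn_Iio R L hj hk (sub_right_injective hjk)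

end Orbit

lemma card_filter_range_natCast_eq {c L : ℕ} [NeZero c] (hcL : c ∣ L) (w : ZMod c) :
    #{k ∈ range L | ((k : ℕ) : ZMod c) = w} = L / c := by
  have hw (k : ℕ) : (k : ZMod c) = w ↔ k ≡ w.val [MOD c] := by
    rw [← ZMod.natCast_eq_natCast_iff, ZMod.natCast_zmod_val]
  simp_rw [hw]
  rw [← Nat.count_eq_card_filter_range, Nat.count_modEq_card _ (NeZero.pos c),
    Nat.mod_eq_zero_of_dvd hcL]
  simp

lemma sum_range_ite_sub_natCast_eq {c L : ℕ} [NeZero c] (hcL : c ∣ L) (x t : ZMod c) :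
    ∑ k ∈ range L, (if x - (k : ZMod c) = t then 1 else 0) = L / c := by
  have hiff (k : ℕ) : x - (k : ZMod c) = t ↔ (k : ZMod c) = x - t := by
    rw [sub_eq_iff_eq_add', eq_sub_iff_add_eq, eq_comm]
  simp_rw [hiff]
  rw [sum_boole, Nat.cast_id, card_filter_range_natCast_eq hcL]

lemma ZMod.zero_eq_natCast_sub_one_iff {n : ℕ} : (0 : ZMod n) = (n : ZMod n) - 1 ↔ n = 1 := by
  rw [ZMod.natCast_self, zero_sub, eq_comm, neg_eq_zero, ZMod.one_eq_zero_iff]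

lemma three_mul_lcm_sub {a b : ℕ} (ha : 0 < a) (hb : 0 < b) :
    3 * Nat.lcm a b - 2 * (Nat.lcm a b / a) - 2 * (Nat.lcm a b / b)
      = (3 * a * b - 2 * a - 2 * b) / Nat.gcd a b := by
  obtain ⟨g, a', b', hg, hco, rfl, rfl⟩ := Nat.exists_coprime' (Nat.gcd_pos_of_pos_left b ha)
  have hL : Nat.lcm (a' * g) (b' * g) = a' * b' * g := by
    rw [Nat.lcm_mul_right, hco.lcm_eq_mul]
  have hLa : a' * b' * g / (a' * g) = b' := by
    rw [show a' * b' * g = b' * (a' * g) by ring, Nat.mul_div_cancel _ ha]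
  have hLb : a' * b' * g / (b' * g) = a' := by
    rw [mul_assoc, Nat.mul_div_cancel _ hb]
  have hnum : 3 * (a' * g) * (b' * g) - 2 * (a' * g) - 2 * (b' * g)
      = (3 * (a' * b' * g) - 2 * b' - 2 * a') * g := by
    simp only [Nat.sub_mul]
    rw [Nat.sub_right_comm]
    ring_nf
  rw [Nat.gcd_mul_right, hco.gcd_eq_one, one_mul, hL, hLa, hLb, hnum, Nat.mul_div_cancel _ hg]

lemma tsub_boundary_indicators_add_eq_three {a b : ℕ} (hab : ¬(a = 1 ∧ b = 1))
    (x : ZMod a) (y : ZMod b) :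
    (3 - (if x = 0 then 1 else 0) - (if x = (a : ZMod a) - 1 then 1 else 0)
        - (if y = 0 then 1 else 0) - (if y = (b : ZMod b) - 1 then 1 else 0))
      + ((if x = 0 then 1 else 0) + (if x = (a : ZMod a) - 1 then 1 else 0))
      + ((if y = 0 then 1 else 0) + (if y = (b : ZMod b) - 1 then 1 else 0)) = 3 := by
  have : ¬(x = 0 ∧ x = (a : ZMod a) - 1 ∧ y = 0 ∧ y = (b : ZMod b) - 1) := by
    rintro ⟨rfl, ha, rfl, hb⟩
    exact hab ⟨ZMod.zero_eq_natCast_sub_one_iff.mp ha, ZMod.zero_eq_natCast_sub_one_iff.mp hb⟩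
  split_ifs <;> first | rfl | tauto

/-- The peak statistic `peak(x,y) = 3 - [x=0] - [x=a-1] - [y=0] - [y=b-1]` sums to
`(3ab - 2a - 2b)/gcd(a,b)` over every rowmotion orbit of `C_a × C_b`. -/
theorem stmt_2 (a b : ℕ) (ha : 0 < a) (hb : 0 < b) :
    let Row : ZMod a × ZMod b → ZMod a × ZMod b := fun z => (z.1 - 1, z.2 - 1)
    let peak : ZMod a × ZMod b → ℕ := fun z =>
      3 - (if z.1 = 0 then 1 else 0) - (if z.1 = (a : ZMod a) - 1 then 1 else 0)
        - (if z.2 = 0 then 1 else 0) - (if z.2 = (b : ZMod b) - 1 then 1 else 0)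
    ∀ z : ZMod a × ZMod b,
      (∑ᶠ w ∈ ({w | ∃ k : ℕ, Row^[k] z = w} : Set (ZMod a × ZMod b)), peak w)
        = (3 * a * b - 2 * a - 2 * b) / Nat.gcd a b := by
  intro Row peak z
  -- for `a = b = 1` all four indicators hold and `peak` truncates `3 - 4` to `0`
  obtain ⟨rfl, rfl⟩ | hab := em (a = 1 ∧ b = 1)
  · simp [peak, Subsingleton.elim _ (0 : ZMod 1)]
  have : NeZero a := ⟨ha.ne'⟩
  have : NeZero b := ⟨hb.ne'⟩
  have : NeZero (Nat.lcm a b) := ⟨Nat.lcm_ne_zero ha.ne' hb.ne'⟩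
  have hRow : Row = fun w => w - 1 := rfl
  rw [hRow, finsum_mem_setOf_iterate_sub_one (Nat.lcm a b), ← three_mul_lcm_sub ha hb]
  have hsum := sum_congr rfl fun k (_ : k ∈ range (Nat.lcm a b)) =>
    tsub_boundary_indicators_add_eq_three hab (z - k).1 (z - k).2
  simp only [sum_add_distrib, Prod.fst_sub, Prod.snd_sub, Prod.fst_natCast, Prod.snd_natCast,
    sum_range_ite_sub_natCast_eq (Nat.dvd_lcm_left a b),
    sum_range_ite_sub_natCast_eq (Nat.dvd_lcm_right a b), sum_const, card_range,
    smul_eq_mul] at hsum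
  simp only [peak, Prod.fst_sub, Prod.snd_sub, Prod.fst_natCast, Prod.snd_natCast]
  omega
end

section
/- Let a,b be positive integers and Row(x,y) = ((x-1) mod a, (y-1) mod b) act on {0,…,a-1}×{0,…,b-1}. Define val(x,y) = 2 - [x=a-1] - [y=b-1]. Then for every orbit O of Row, the sum of val over the elements of O equals (2ab - a - b)/gcd(a,b). -/
/-!
Row is the product of the two rotations `x ↦ x - 1` of `ZMod a` and `ZMod b`, whose minimal
periods are `a` and `b`, so every orbit is traversed in `L = lcm a b` steps. Along one traversal
each coordinate runs `L / a` (resp. `L / b`) times through its whole cycle, and `val` splits as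
`[x ≠ -1] + [y ≠ -1]`; hence the orbit sum is `L / a * (a - 1) + L / b * (b - 1)`, which equals
`(2ab - a - b) / gcd a b`.
-/

open Finset Function

namespace Function

variable {α M : Type*} [AddCommMonoid M]

theorem finsum_mem_iterate_eq_sum_range {f : α → α} {x : α} (hx : 0 < minimalPeriod f x)
    (φ : α → M) :
    ∑ᶠ w ∈ {w | ∃ k, f^[k] x = w}, φ w = ∑ k ∈ range (minimalPeriod f x), φ (f^[k] x) := by
  classical
  have horbit : {w | ∃ k, f^[k] x = w} = (range (minimalPeriod f x)).image (f^[·] x) := by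
    ext w
    simp only [coe_image, coe_range, Set.mem_image, Set.mem_Iio]
    constructor
    · rintro ⟨k, rfl⟩
      exact ⟨k % minimalPeriod f x, Nat.mod_lt k hx, iterate_mod_minimalPeriod_eq⟩
    · rintro ⟨k, -, rfl⟩
      exact ⟨k, rfl⟩
  rw [horbit, finsum_mem_coe_finset, sum_image]
  simpa using iterate_injOn_Iio_minimalPeriod (f := f) (x := x)

theorem sum_range_mul_of_isPeriodicPt {f : α → α} {x : α} {n : ℕ} (hx : IsPeriodicPt f n x)
    (φ : α → M) (m : ℕ) :
    ∑ k ∈ range (m * n), φ (f^[k] x) = m • ∑ k ∈ range n, φ (f^[k] x) := by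
  induction m with
  | zero => simp
  | succ m ih =>
    rw [Nat.succ_mul, sum_range_add, ih, succ_nsmul]
    congr 1
    refine sum_congr rfl fun k _ => ?_
    rw [add_comm, iterate_add_apply, (hx.const_mul m).eq]

theorem sum_range_minimalPeriod_eq_sum_univ [Fintype α] {f : α → α} {x : α}
    (hx : 0 < minimalPeriod f x) (hsurj : ∀ y, ∃ k, f^[k] x = y) (φ : α → M) :
    ∑ k ∈ range (minimalPeriod f x), φ (f^[k] x) = ∑ y, φ y := by
  have horbit : {w | ∃ k, f^[k] x = w} = Set.univ := Set.eq_univ_of_forall hsurj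
  rw [← finsum_mem_iterate_eq_sum_range hx, horbit, finsum_mem_univ, finsum_eq_sum_of_fintype]

end Function

theorem minimalPeriod_sub_right {G : Type*} [AddGroup G] (c x : G) :
    minimalPeriod (· - c) x = addOrderOf c := by
  rw [addOrderOf, minimalPeriod_eq_minimalPeriod_iff]
  intro n
  simp [IsPeriodicPt, IsFixedPt, sub_eq_add_neg, add_right_iterate_apply, add_left_iterate]

theorem Nat.lcm_div_mul_gcd {a : ℕ} (b : ℕ) (ha : 0 < a) : Nat.lcm a b / a * Nat.gcd a b = b := by
  refine Nat.eq_of_mul_eq_mul_left ha ?_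
  rw [← mul_assoc, Nat.mul_div_cancel' (Nat.dvd_lcm_left a b), mul_comm, Nat.gcd_mul_lcm]

theorem Nat.lcm_div_mul_sub_one_add {a b : ℕ} (ha : 0 < a) (hb : 0 < b) :
    Nat.lcm a b / a * (a - 1) + Nat.lcm a b / b * (b - 1) = (2 * a * b - a - b) / Nat.gcd a b := by
  refine Nat.eq_div_of_mul_eq_left (Nat.gcd_pos_of_pos_left b ha).ne' ?_
  have hb' := Nat.lcm_div_mul_gcd b ha
  have ha' := Nat.lcm_div_mul_gcd a hb
  rw [Nat.gcd_comm, Nat.lcm_comm] at ha'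
  calc (Nat.lcm a b / a * (a - 1) + Nat.lcm a b / b * (b - 1)) * Nat.gcd a b
      = Nat.lcm a b / a * Nat.gcd a b * (a - 1) + Nat.lcm a b / b * Nat.gcd a b * (b - 1) := by ring
    _ = 2 * a * b - a - b := by
      rw [hb', ha', Nat.mul_sub_one, Nat.mul_sub_one, mul_comm b a, mul_assoc, two_mul]
      have : a ≤ a * b := Nat.le_mul_of_pos_right a hb
      have : b ≤ a * b := Nat.le_mul_of_pos_left b ha
      omega

namespace ZMod

variable {n : ℕ} [NeZero n]

theorem sum_range_iterate_sub_one {M : Type*} [AddCommMonoid M] {L : ℕ} (hL : n ∣ L)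
    (x : ZMod n) (φ : ZMod n → M) :
    ∑ k ∈ range L, φ ((· - 1)^[k] x) = (L / n) • ∑ y, φ y := by
  have hper : minimalPeriod (· - 1) x = n := by
    rw [minimalPeriod_sub_right, ZMod.addOrderOf_one]
  have hsurj : ∀ y, ∃ k, (· - 1)^[k] x = y := fun y =>
    ⟨(x - y).val, by simp [sub_eq_add_neg, add_right_iterate_apply]⟩
  have hcycle := sum_range_minimalPeriod_eq_sum_univ (hper.symm ▸ NeZero.pos n) hsurj φ
  have hrep := sum_range_mul_of_isPeriodicPt (isPeriodicPt_minimalPeriod (· - 1) x) φ (L / n)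
  rw [hper] at hcycle hrep
  rw [← hcycle, ← hrep, Nat.div_mul_cancel hL]

theorem sum_ite_eq_neg_one_zero_one :
    ∑ y : ZMod n, (if y = -1 then 0 else 1) = n - 1 := by
  simp [Finset.sum_ite, Finset.filter_ne']

end ZMod

/-- The valley statistic `val(x,y) = 2 - [x=a-1] - [y=b-1]` sums to
`(2ab - a - b)/gcd(a,b)` over every rowmotion orbit of `C_a × C_b`. -/
theorem stmt_3 (a b : ℕ) (ha : 0 < a) (hb : 0 < b) :
    let Row : ZMod a × ZMod b → ZMod a × ZMod b := fun z => (z.1 - 1, z.2 - 1)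
    let val : ZMod a × ZMod b → ℕ := fun z =>
      2 - (if z.1 = (a : ZMod a) - 1 then 1 else 0)
        - (if z.2 = (b : ZMod b) - 1 then 1 else 0)
    ∀ z : ZMod a × ZMod b,
      (∑ᶠ w ∈ ({w | ∃ k : ℕ, Row^[k] z = w} : Set (ZMod a × ZMod b)), val w)
        = (2 * a * b - a - b) / Nat.gcd a b := by
  intro Row val z
  have : NeZero a := ⟨ha.ne'⟩
  have : NeZero b := ⟨hb.ne'⟩
  have hRow : Row = Prod.map (· - 1) (· - 1) := rfl
  have hval : ∀ w, val w = (if w.1 = -1 then 0 else 1) + (if w.2 = -1 then 0 else 1) := by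
    intro w
    simp only [val, ZMod.natCast_self, zero_sub]
    split_ifs <;> rfl
  have hper : minimalPeriod Row z = Nat.lcm a b := by
    rw [hRow, minimalPeriod_prodMap, minimalPeriod_sub_right, minimalPeriod_sub_right,
      ZMod.addOrderOf_one, ZMod.addOrderOf_one]
  rw [finsum_mem_iterate_eq_sum_range (hper ▸ Nat.lcm_pos ha hb), hper]
  simp only [hval, sum_add_distrib, hRow, Prod.map_iterate, Prod.map_fst, Prod.map_snd]
  rw [ZMod.sum_range_iterate_sub_one (Nat.dvd_lcm_left a b) _ (fun y => if y = -1 then 0 else 1),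
    ZMod.sum_range_iterate_sub_one (Nat.dvd_lcm_right a b) _ (fun y => if y = -1 then 0 else 1),
    ZMod.sum_ite_eq_neg_one_zero_one, ZMod.sum_ite_eq_neg_one_zero_one, smul_eq_mul, smul_eq_mul]
  exact Nat.lcm_div_mul_sub_one_add ha hb
end

section
/- Let a,b be positive integers and Row(x,y) = ((x-1) mod a, (y-1) mod b) act on {0,…,a-1}×{0,…,b-1}. Define area(x,y) = x + y. Then for every orbit O of Row, the sum of area over the elements of O equals lcm(a,b) · (a+b-2)/2. -/
lemma sum_block (n : ℕ) (hn : 0 < n) (c : ZMod n) :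
    ∑ i ∈ Finset.range n, (c - (i : ZMod n)).val = ∑ i ∈ Finset.range n, i := by
  haveI : NeZero n := ⟨hn.ne'⟩
  refine Finset.sum_nbij' (fun i => (c - (i : ZMod n)).val)
    (fun j => (c - (j : ZMod n)).val) ?_ ?_ ?_ ?_ ?_
  · intro i _; exact Finset.mem_range.mpr (ZMod.val_lt _)
  · intro j _; exact Finset.mem_range.mpr (ZMod.val_lt _)
  · intro i hi
    show (c - (((c - (i : ZMod n)).val : ℕ) : ZMod n)).val = i
    rw [ZMod.natCast_val, ZMod.cast_id]
    have : c - (c - (i : ZMod n)) = (i : ZMod n) := by ring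
    rw [this, ZMod.val_cast_of_lt (Finset.mem_range.mp hi)]
  · intro j hj
    show (c - (((c - (j : ZMod n)).val : ℕ) : ZMod n)).val = j
    rw [ZMod.natCast_val, ZMod.cast_id]
    have : c - (c - (j : ZMod n)) = (j : ZMod n) := by ring
    rw [this, ZMod.val_cast_of_lt (Finset.mem_range.mp hj)]
  · intro i _; rfl

lemma sum_blocks (n : ℕ) (hn : 0 < n) (c : ZMod n) (m : ℕ) :
    ∑ k ∈ Finset.range (n * m), (c - (k : ZMod n)).val = m * ∑ i ∈ Finset.range n, i := by
  induction m with
  | zero => simp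
  | succ m ih =>
    have : n * (m + 1) = n * m + n := by ring
    rw [this, Finset.sum_range_add]
    have h2 : ∀ i : ℕ, (((n * m + i : ℕ) : ZMod n)) = (i : ZMod n) := by
      intro i; push_cast; simp
    calc ∑ k ∈ Finset.range (n * m), (c - (k : ZMod n)).val
          + ∑ i ∈ Finset.range n, (c - ((n * m + i : ℕ) : ZMod n)).val
        = m * ∑ i ∈ Finset.range n, i + ∑ i ∈ Finset.range n, (c - (i : ZMod n)).val := by
          rw [ih]; congr 1; refine Finset.sum_congr rfl fun i _ => by rw [h2]
      _ = (m + 1) * ∑ i ∈ Finset.range n, i := by rw [sum_block n hn c]; ring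

/-- The area statistic `area(x,y) = x + y` sums to `lcm(a,b)·(a+b-2)/2` over
every rowmotion orbit of `C_a × C_b`. -/
theorem stmt_4 (a b : ℕ) (ha : 0 < a) (hb : 0 < b) :
    let Row : ZMod a × ZMod b → ZMod a × ZMod b := fun z => (z.1 - 1, z.2 - 1)
    let area : ZMod a × ZMod b → ℕ := fun z => z.1.val + z.2.val
    ∀ z : ZMod a × ZMod b,
      (∑ᶠ w ∈ ({w | ∃ k : ℕ, Row^[k] z = w} : Set (ZMod a × ZMod b)), area w)
        = Nat.lcm a b * (a + b - 2) / 2 := by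
  intro Row area z
  haveI : NeZero a := ⟨ha.ne'⟩
  haveI : NeZero b := ⟨hb.ne'⟩
  set L := Nat.lcm a b with hL
  have hLpos : 0 < L := Nat.pos_of_ne_zero (Nat.lcm_ne_zero ha.ne' hb.ne')
  have haL : a ∣ L := Nat.dvd_lcm_left a b
  have hbL : b ∣ L := Nat.dvd_lcm_right a b
  -- iterate formula
  have hiter : ∀ k : ℕ, Row^[k] z = (z.1 - (k : ZMod a), z.2 - (k : ZMod b)) := by
    intro k
    induction k with
    | zero => simp
    | succ n ih =>
      rw [Function.iterate_succ_apply', ih]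
      show (z.1 - (n : ZMod a) - 1, z.2 - (n : ZMod b) - 1) = _
      refine Prod.ext ?_ ?_
      · show z.1 - (n : ZMod a) - 1 = ((n:ℕ)+1 : ℕ) |> fun _ => _
        push_cast; ring
      · push_cast; ring
  set f : ℕ → ZMod a × ZMod b := fun k => (z.1 - (k : ZMod a), z.2 - (k : ZMod b)) with hf
  -- orbit = image of range L
  have hset : ({w | ∃ k : ℕ, Row^[k] z = w} : Set (ZMod a × ZMod b))
      = ↑((Finset.range L).image f) := by
    ext w
    simp only [Set.mem_setOf_eq, Finset.coe_image, Set.mem_image, Finset.mem_coe,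
      Finset.mem_range]
    constructor
    · rintro ⟨k, rfl⟩
      refine ⟨k % L, Nat.mod_lt _ hLpos, ?_⟩
      rw [hiter]
      have h1 : ((k % L : ℕ) : ZMod a) = (k : ZMod a) := by
        rw [ZMod.natCast_eq_natCast_iff]
        exact (Nat.mod_modEq k L).of_dvd haL
      have h2 : ((k % L : ℕ) : ZMod b) = (k : ZMod b) := by
        rw [ZMod.natCast_eq_natCast_iff]
        exact (Nat.mod_modEq k L).of_dvd hbL
      simp [hf, h1, h2]
    · rintro ⟨k, _, rfl⟩
      exact ⟨k, hiter k⟩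
  rw [hset, finsum_mem_coe_finset]
  -- injectivity
  have hinj : ∀ x ∈ Finset.range L, ∀ y ∈ Finset.range L, f x = f y → x = y := by
    have key : ∀ x y : ℕ, x ≤ y → x < L → y < L → f x = f y → x = y := by
      intro x y hxy hx hy hfe
      have h1 : (x : ZMod a) = (y : ZMod a) := by
        have := congrArg Prod.fst hfe
        simpa [hf, sub_right_injective.eq_iff] using this
      have h2 : (x : ZMod b) = (y : ZMod b) := by
        have := congrArg Prod.snd hfe
        simpa [hf, sub_right_injective.eq_iff] using this
      have d1 : a ∣ y - x := (Nat.modEq_iff_dvd' hxy).mp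
        ((ZMod.natCast_eq_natCast_iff _ _ _).mp h1)
      have d2 : b ∣ y - x := (Nat.modEq_iff_dvd' hxy).mp
        ((ZMod.natCast_eq_natCast_iff _ _ _).mp h2)
      have dL : L ∣ y - x := Nat.lcm_dvd d1 d2
      have : y - x < L := lt_of_le_of_lt (Nat.sub_le _ _) hy
      have h0 : y - x = 0 := Nat.eq_zero_of_dvd_of_lt dL this
      omega
    intro x hx y hy hfe
    rcases le_total x y with h | h
    · exact key x y h (Finset.mem_range.mp hx) (Finset.mem_range.mp hy) hfe
    · exact (key y x h (Finset.mem_range.mp hy) (Finset.mem_range.mp hx) hfe.symm).symm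
  rw [Finset.sum_image hinj]
  -- compute the sum
  have hsum : ∑ k ∈ Finset.range L, area (f k)
      = ∑ k ∈ Finset.range L, (z.1 - (k : ZMod a)).val
        + ∑ k ∈ Finset.range L, (z.2 - (k : ZMod b)).val := by
    rw [← Finset.sum_add_distrib]
  rw [hsum]
  have hLa : a * (L / a) = L := Nat.mul_div_cancel' haL
  have hLb : b * (L / b) = L := Nat.mul_div_cancel' hbL
  have s1 : ∑ k ∈ Finset.range L, (z.1 - (k : ZMod a)).val
      = (L / a) * ∑ i ∈ Finset.range a, i := by
    have := sum_blocks a ha z.1 (L / a); rwa [hLa] at this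
  have s2 : ∑ k ∈ Finset.range L, (z.2 - (k : ZMod b)).val
      = (L / b) * ∑ i ∈ Finset.range b, i := by
    have := sum_blocks b hb z.2 (L / b); rwa [hLb] at this
  rw [s1, s2]
  -- final arithmetic
  have g1 : (∑ i ∈ Finset.range a, i) * 2 = a * (a - 1) := Finset.sum_range_id_mul_two a
  have g2 : (∑ i ∈ Finset.range b, i) * 2 = b * (b - 1) := Finset.sum_range_id_mul_two b
  have key : ((L / a) * ∑ i ∈ Finset.range a, i + (L / b) * ∑ i ∈ Finset.range b, i) * 2
      = L * (a + b - 2) := by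
    have : (a + b - 2) = (a - 1) + (b - 1) := by omega
    rw [this, add_mul, mul_assoc, mul_assoc, g1, g2, Nat.mul_add,
      ← mul_assoc, ← mul_assoc]
    rw [Nat.div_mul_cancel haL, Nat.div_mul_cancel hbL]
  symm
  exact Nat.div_eq_of_eq_mul_left (by norm_num) key.symm
end

section
/- Let a,b be positive integers and Row(x,y) = ((x-1) mod a, (y-1) mod b) act on {0,…,a-1}×{0,…,b-1}. Define area'(x,y) = x + y + [x = a-1]. Then for every orbit O of Row, the sum of area' over the elements of O equals lcm(a,b)·((a+b-2)/2 + 1/a), i.e. lcm(a,b)·(a+b-2)/2 + b/gcd(a,b). -/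
open Finset

lemma sum_period' (g : ℕ → ℕ) (a m : ℕ) :
    ∑ k ∈ Finset.range (m * a), g (k % a) = m * ∑ r ∈ Finset.range a, g r := by
  induction m with
  | zero => simp
  | succ m ih =>
    rw [Nat.succ_mul, Finset.sum_range_add, ih, Nat.succ_mul]
    congr 1
    refine Finset.sum_congr rfl fun i hi => ?_
    have hi' := Finset.mem_range.mp hi
    have h2 : m * a + i = i + m * a := by ring
    rw [h2, Nat.add_mul_mod_self_right, Nat.mod_eq_of_lt hi']

lemma sum_val' (a : ℕ) [NeZero a] (x : ZMod a) :
    ∑ r ∈ Finset.range a, (x - (r : ZMod a)).val = ∑ r ∈ Finset.range a, r := by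
  refine Finset.sum_nbij' (fun r => (x - (r : ZMod a)).val)
    (fun i => (x - (i : ZMod a)).val) ?_ ?_ ?_ ?_ ?_
  · intro r _; exact Finset.mem_range.mpr (ZMod.val_lt _)
  · intro i _; exact Finset.mem_range.mpr (ZMod.val_lt _)
  · intro r hr
    simp [ZMod.natCast_val, ZMod.cast_id, sub_sub_cancel, ZMod.val_natCast,
      Nat.mod_eq_of_lt (Finset.mem_range.mp hr)]
  · intro i hi
    simp [ZMod.natCast_val, ZMod.cast_id, sub_sub_cancel, ZMod.val_natCast,
      Nat.mod_eq_of_lt (Finset.mem_range.mp hi)]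
  · intro r _; rfl

lemma sum_ind' (a : ℕ) [NeZero a] (x : ZMod a) :
    ∑ r ∈ Finset.range a, (if x - (r : ZMod a) = -1 then 1 else 0) = 1 := by
  have key : ∀ r : ℕ, (x - (r : ZMod a) = -1) ↔ ((r : ZMod a) = x + 1) := by
    intro r
    constructor <;> intro h <;> linear_combination -h
  rw [Finset.sum_eq_single_of_mem (x + 1).val
    (Finset.mem_range.mpr (ZMod.val_lt _))]
  · rw [if_pos]
    rw [key, ZMod.natCast_val, ZMod.cast_id]
  · intro c hc hne
    rw [if_neg]
    rw [key]
    intro h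
    exact hne (by rw [← h, ZMod.val_natCast, Nat.mod_eq_of_lt (Finset.mem_range.mp hc)])

lemma modeq_lcm' {a b k k' : ℕ} (h1 : k ≡ k' [MOD a]) (h2 : k ≡ k' [MOD b]) :
    k ≡ k' [MOD Nat.lcm a b] := by
  rcases le_total k k' with h | h
  · exact (Nat.modEq_iff_dvd' h).mpr
      (Nat.lcm_dvd ((Nat.modEq_iff_dvd' h).mp h1) ((Nat.modEq_iff_dvd' h).mp h2))
  · exact ((Nat.modEq_iff_dvd' h).mpr
      (Nat.lcm_dvd ((Nat.modEq_iff_dvd' h).mp h1.symm) ((Nat.modEq_iff_dvd' h).mp h2.symm))).symm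

/-- The statistic `area'(x,y) = x + y + [x = a-1]` sums to
`lcm(a,b)·(a+b-2)/2 + b/gcd(a,b)` over every rowmotion orbit of `C_a × C_b`. -/
theorem stmt_5 (a b : ℕ) (ha : 0 < a) (hb : 0 < b) :
    let Row : ZMod a × ZMod b → ZMod a × ZMod b := fun z => (z.1 - 1, z.2 - 1)
    let area' : ZMod a × ZMod b → ℕ := fun z =>
      z.1.val + z.2.val + (if z.1 = (a : ZMod a) - 1 then 1 else 0)
    ∀ z : ZMod a × ZMod b,
      (∑ᶠ w ∈ ({w | ∃ k : ℕ, Row^[k] z = w} : Set (ZMod a × ZMod b)), area' w)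
        = Nat.lcm a b * (a + b - 2) / 2 + b / Nat.gcd a b := by
  intro Row area' z
  haveI : NeZero a := ⟨ha.ne'⟩
  haveI : NeZero b := ⟨hb.ne'⟩
  set L := Nat.lcm a b with hL
  have haL : a ∣ L := Nat.dvd_lcm_left a b
  have hbL : b ∣ L := Nat.dvd_lcm_right a b
  have hLpos : 0 < L := Nat.pos_of_ne_zero (Nat.lcm_ne_zero ha.ne' hb.ne')
  set e : ℕ → ZMod a × ZMod b := fun k => (z.1 - (k : ZMod a), z.2 - (k : ZMod b)) with he
  have hiter : ∀ k, Row^[k] z = e k := by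
    intro k; induction k with
    | zero => simp [he]
    | succ k ih =>
      rw [Function.iterate_succ_apply', ih]
      simp only [he, Row, Prod.mk.injEq]
      constructor <;> (push_cast; ring)
  have hper : ∀ k, e k = e (k % L) := by
    intro k
    have h1 : k % L ≡ k [MOD L] := Nat.mod_modEq k L
    simp only [he, Prod.mk.injEq]
    constructor
    · rw [sub_right_inj, ZMod.natCast_eq_natCast_iff]
      exact (h1.of_dvd haL).symm
    · rw [sub_right_inj, ZMod.natCast_eq_natCast_iff]
      exact (h1.of_dvd hbL).symm
  have hset : ({w | ∃ k : ℕ, Row^[k] z = w} : Set (ZMod a × ZMod b))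
      = ↑((Finset.range L).image e) := by
    ext w
    simp only [Set.mem_setOf_eq, Finset.coe_image, Set.mem_image, Finset.mem_coe,
      Finset.mem_range]
    constructor
    · rintro ⟨k, rfl⟩
      exact ⟨k % L, Nat.mod_lt _ hLpos, by rw [hiter, ← hper]⟩
    · rintro ⟨k, _, rfl⟩; exact ⟨k, hiter k⟩
  have hinj : ∀ x ∈ Finset.range L, ∀ y ∈ Finset.range L, e x = e y → x = y := by
    intro x hx y hy hxy
    simp only [he, Prod.mk.injEq, sub_right_inj, ZMod.natCast_eq_natCast_iff] at hxy
    have := modeq_lcm' hxy.1 hxy.2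
    rw [Nat.ModEq, Nat.mod_eq_of_lt (Finset.mem_range.mp hx),
      Nat.mod_eq_of_lt (Finset.mem_range.mp hy)] at this
    exact this
  rw [hset, finsum_mem_coe_finset, Finset.sum_image hinj]
  -- now a concrete Finset computation
  have harea : ∀ k : ℕ, area' (e k)
      = ((z.1 - ((k % a : ℕ) : ZMod a)).val
          + (if z.1 - ((k % a : ℕ) : ZMod a) = -1 then 1 else 0))
        + (z.2 - ((k % b : ℕ) : ZMod b)).val := by
    intro k
    simp only [area', he, ZMod.natCast_self, zero_sub, ZMod.natCast_mod]
    ring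
  rw [Finset.sum_congr rfl fun k _ => harea k, Finset.sum_add_distrib]
  have hLa : L = (L / a) * a := (Nat.div_mul_cancel haL).symm
  have hLb : L = (L / b) * b := (Nat.div_mul_cancel hbL).symm
  rw [show (Finset.range L) = Finset.range ((L / a) * a) from by rw [← hLa]]
  rw [sum_period' (fun r => (z.1 - (r : ZMod a)).val
    + (if z.1 - (r : ZMod a) = -1 then 1 else 0)) a (L / a)]
  rw [show (Finset.range ((L / a) * a)) = Finset.range ((L / b) * b) from by
    rw [← hLa, ← hLb]]
  rw [sum_period' (fun r => (z.2 - (r : ZMod b)).val) b (L / b)]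
  rw [Finset.sum_add_distrib, sum_val' a z.1, sum_ind' a z.1, sum_val' b z.2]
  -- arithmetic
  have hba : b / Nat.gcd a b = L / a := by
    rw [hL, Nat.lcm, Nat.mul_div_assoc a (Nat.gcd_dvd_right a b),
      Nat.mul_div_cancel_left _ ha]
  have h2a : (∑ r ∈ Finset.range a, r) * 2 = a * (a - 1) := Finset.sum_range_id_mul_two a
  have h2b : (∑ r ∈ Finset.range b, r) * 2 = b * (b - 1) := Finset.sum_range_id_mul_two b
  have hkey : L * (a + b - 2)
      = ((L / a) * (∑ r ∈ Finset.range a, r) + (L / b) * (∑ r ∈ Finset.range b, r)) * 2 := by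
    rw [add_mul, mul_assoc, mul_assoc, h2a, h2b, ← mul_assoc, ← mul_assoc,
      Nat.div_mul_cancel haL, Nat.div_mul_cancel hbL, ← Nat.left_distrib]
    congr 1
    omega
  rw [hkey, Nat.mul_div_cancel _ (by norm_num), hba]
  ring
end

section
/- Let a,b ≥ 1, g = gcd(a,b), ℓ = lcm(a,b), and suppose g > 1. Let X be a set of size gℓ + 1 equipped with a permutation Row whose cycle type consists of g-1 cycles of length ℓ and one cycle of length ℓ+1. Then the order of Row is ℓ(ℓ+1), and the triple (X, Row, f(q)) exhibits the cyclic sieving phenomenon, where f(q) = Σ_{j=0}^{ℓ} q^{jℓ} + (g-1)·Σ_{j=0}^{ℓ-1} q^{j(ℓ+1)}: that is, for every integer d, the number of elements x ∈ X with Row^d(x) = x equals f(ω^d) with ω = e^{2πi/(ℓ(ℓ+1))}. -/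
open Finset Equiv Equiv.Perm

private lemma geom_sum_prim {ζ : ℂ} {n : ℕ} (hζ : IsPrimitiveRoot ζ n) (d : ℤ) :
    (∑ j ∈ Finset.range n, (ζ ^ d) ^ j) = if (n : ℤ) ∣ d then (n : ℂ) else 0 := by
  by_cases h : (n : ℤ) ∣ d
  · rw [if_pos h]
    have h1 : ζ ^ d = 1 := (hζ.zpow_eq_one_iff_dvd d).2 h
    simp [h1]
  · rw [if_neg h]
    have h1 : ζ ^ d ≠ 1 := fun hc => h ((hζ.zpow_eq_one_iff_dvd d).1 hc)
    have h2 : (ζ ^ d) ^ n = 1 := by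
      rw [← zpow_natCast, ← zpow_mul, mul_comm, zpow_mul, zpow_natCast, hζ.pow_eq_one, one_zpow]
    rw [geom_sum_eq h1, h2, sub_self, zero_div]

private lemma fixed_count {X : Type*} [Fintype X] [DecidableEq X] (σ : Equiv.Perm X)
    (hs : σ.support = Finset.univ) (d : ℤ) :
    (Finset.univ.filter fun x : X => (σ ^ d) x = x).card =
      (σ.cycleType.map fun k : ℕ => if (k : ℤ) ∣ d then k else 0).sum := by
  have huniv : (Finset.univ : Finset X) = σ.cycleFactorsFinset.biUnion (fun c => c.support) := by
    rw [← hs]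
    ext x
    rw [Finset.mem_biUnion]
    simpa using Equiv.Perm.mem_support_iff_mem_support_of_mem_cycleFactorsFinset (g := σ) (x := x)
  have hdisj : ∀ c ∈ σ.cycleFactorsFinset, ∀ c' ∈ σ.cycleFactorsFinset, c ≠ c' →
      Disjoint (c.support.filter fun x => (σ ^ d) x = x)
        (c'.support.filter fun x => (σ ^ d) x = x) := by
    intro c hc c' hc' hne
    have := (σ.cycleFactorsFinset_pairwise_disjoint hc hc' hne).disjoint_support
    exact Finset.disjoint_filter_filter this
  have hcard : ∀ c ∈ σ.cycleFactorsFinset,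
      (c.support.filter fun x => (σ ^ d) x = x).card =
        (fun k : ℕ => if (k : ℤ) ∣ d then k else 0) c.support.card := by
    intro c hc
    have key : ∀ x ∈ c.support, ((σ ^ d) x = x ↔ (c.support.card : ℤ) ∣ d) := by
      intro x hx
      have hxs : σ x ≠ x :=
        Equiv.Perm.mem_support.mp (Equiv.Perm.mem_cycleFactorsFinset_support_le hc hx)
      have hco : σ.cycleOf x = c := (Equiv.Perm.cycle_is_cycleOf hx hc).symm
      have h0 := Equiv.Perm.zpow_eq_zpow_on_iff σ (m := d) (n := 0) hxs
      rw [zpow_zero, Equiv.Perm.one_apply, hco, Int.zero_emod] at h0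
      rw [h0]
      exact ⟨fun h => Int.dvd_of_emod_eq_zero h, fun h => Int.emod_eq_zero_of_dvd h⟩
    by_cases hdvd : (c.support.card : ℤ) ∣ d
    · rw [Finset.filter_true_of_mem fun x hx => (key x hx).2 hdvd]
      simp [hdvd]
    · rw [Finset.filter_false_of_mem fun x hx h => hdvd ((key x hx).1 h)]
      simp [hdvd]
  rw [huniv, Finset.filter_biUnion, Finset.card_biUnion hdisj,
    Finset.sum_congr rfl hcard, Equiv.Perm.cycleType_def, Multiset.map_map,
    ← Finset.sum_map_val]
  rfl

/-- Cyclic sieving phenomenon for a permutation with `g-1` cycles of length `ℓ`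
and one cycle of length `ℓ+1`, where `g = gcd(a,b) > 1` and `ℓ = lcm(a,b)`. -/
theorem stmt_6 (a b : ℕ) (ha : 1 ≤ a) (hb : 1 ≤ b) (g ℓ : ℕ)
    (hg : g = Nat.gcd a b) (hl : ℓ = Nat.lcm a b) (hg1 : 1 < g)
    {X : Type*} [Fintype X] [DecidableEq X] (Row : Equiv.Perm X)
    (hX : Fintype.card X = g * ℓ + 1)
    (hcyc : Row.cycleType = Multiset.replicate (g - 1) ℓ + ({ℓ + 1} : Multiset ℕ)) :
    orderOf Row = ℓ * (ℓ + 1) ∧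
    ∀ d : ℤ,
      ((Finset.univ.filter fun x : X => (Row ^ d) x = x).card : ℂ) =
        (∑ j ∈ Finset.range (ℓ + 1),
          ((Complex.exp (2 * Real.pi * Complex.I / ((ℓ : ℂ) * ((ℓ : ℂ) + 1)))) ^ d) ^ (j * ℓ)) +
        ((g : ℂ) - 1) *
        (∑ j ∈ Finset.range ℓ,
          ((Complex.exp (2 * Real.pi * Complex.I / ((ℓ : ℂ) * ((ℓ : ℂ) + 1)))) ^ d) ^ (j * (ℓ + 1))) := by
  -- basic facts
  have hl0 : ℓ ≠ 0 := by
    rw [hl]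
    exact Nat.lcm_ne_zero (by omega) (by omega)
  have hgl : g ∣ ℓ := by
    rw [hg, hl]
    exact dvd_trans (Nat.gcd_dvd_left a b) (Nat.dvd_lcm_left a b)
  have hgsub : ∃ k, g - 1 = k + 1 := ⟨g - 2, by omega⟩
  have hco : Nat.Coprime ℓ (ℓ + 1) := by
    simpa [Nat.Coprime] using Nat.coprime_add_self_left.mpr (Nat.coprime_one_left ℓ)
  have hmem1 : ℓ ∈ Multiset.replicate (g - 1) ℓ + ({ℓ + 1} : Multiset ℕ) := by
    rw [Multiset.mem_add]
    exact Or.inl (Multiset.mem_replicate.mpr ⟨by omega, rfl⟩)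
  have hmem2 : ℓ + 1 ∈ Multiset.replicate (g - 1) ℓ + ({ℓ + 1} : Multiset ℕ) := by
    rw [Multiset.mem_add]
    exact Or.inr (Multiset.mem_singleton_self _)
  -- order of Row
  have horder : orderOf Row = ℓ * (ℓ + 1) := by
    rw [← Equiv.Perm.lcm_cycleType, hcyc]
    apply Nat.dvd_antisymm
    · rw [Multiset.lcm_dvd]
      intro k hk
      rw [Multiset.mem_add] at hk
      rcases hk with hk | hk
      · rw [(Multiset.mem_replicate.mp hk).2]
        exact dvd_mul_right _ _
      · rw [Multiset.mem_singleton.mp hk]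
        exact dvd_mul_left _ _
    · exact hco.mul_dvd_of_dvd_of_dvd (Multiset.dvd_lcm hmem1) (Multiset.dvd_lcm hmem2)
  -- support is everything
  have hsupp : Row.support = Finset.univ := by
    apply Finset.eq_univ_of_card
    rw [← Equiv.Perm.sum_cycleType, hcyc, hX]
    obtain ⟨k, hk⟩ := hgsub
    simp only [Multiset.sum_add, Multiset.sum_replicate, smul_eq_mul, Multiset.sum_singleton, hk]
    have : g = k + 2 := by omega
    rw [this]; ring
  refine ⟨horder, fun d => ?_⟩
  -- primitive roots
  set ω : ℂ := Complex.exp (2 * Real.pi * Complex.I / ((ℓ : ℂ) * ((ℓ : ℂ) + 1))) with hωdef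
  have hcast : ((↑(ℓ * (ℓ + 1)) : ℂ)) = (ℓ : ℂ) * ((ℓ : ℂ) + 1) := by push_cast; ring
  have hω : IsPrimitiveRoot ω (ℓ * (ℓ + 1)) := by
    rw [hωdef, ← hcast]
    exact Complex.isPrimitiveRoot_exp _ (by positivity)
  have hpos : 0 < ℓ * (ℓ + 1) := by positivity
  have hζ : IsPrimitiveRoot (ω ^ ℓ) (ℓ + 1) := hω.pow hpos rfl
  have hξ : IsPrimitiveRoot (ω ^ (ℓ + 1)) ℓ := hω.pow hpos (mul_comm _ _)
  -- rewrite the two sums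
  have hterm1 : ∀ j, (ω ^ d) ^ (j * ℓ) = ((ω ^ ℓ) ^ d) ^ j := by
    intro j
    rw [mul_comm j ℓ, pow_mul, ← zpow_natCast (ω ^ d) ℓ, ← zpow_mul, mul_comm d (ℓ : ℤ),
      zpow_mul, zpow_natCast]
  have hterm2 : ∀ j, (ω ^ d) ^ (j * (ℓ + 1)) = ((ω ^ (ℓ + 1)) ^ d) ^ j := by
    intro j
    rw [mul_comm j (ℓ + 1), pow_mul, ← zpow_natCast (ω ^ d) (ℓ + 1), ← zpow_mul,
      mul_comm d (((ℓ + 1 : ℕ) : ℤ)), zpow_mul, zpow_natCast]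
  have hsum1 : (∑ j ∈ Finset.range (ℓ + 1), (ω ^ d) ^ (j * ℓ)) =
      if ((ℓ : ℤ) + 1) ∣ d then ((ℓ : ℂ) + 1) else 0 := by
    rw [Finset.sum_congr rfl fun j _ => hterm1 j, geom_sum_prim hζ d]
    norm_num
  have hsum2 : (∑ j ∈ Finset.range ℓ, (ω ^ d) ^ (j * (ℓ + 1))) =
      if (ℓ : ℤ) ∣ d then (ℓ : ℂ) else 0 := by
    rw [Finset.sum_congr rfl fun j _ => hterm2 j, geom_sum_prim hξ d]
  have hfc := fixed_count Row hsupp d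
  rw [hcyc] at hfc
  simp only [Multiset.map_add, Multiset.map_replicate, Multiset.map_singleton, Multiset.sum_add,
    Multiset.sum_replicate, smul_eq_mul, Multiset.sum_singleton] at hfc
  rw [hsum1, hsum2, hfc]
  push_cast [Nat.cast_sub hg1.le, apply_ite (Nat.cast : ℕ → ℂ)]
  split_ifs <;> push_cast <;> ring
end

section
/- Let a ≥ 1 and 1 ≤ b ≤ a with a and b both odd. The set of pairs (x₁,x₂) of integers with b-1 ≤ x₁ ≤ x₂ ≤ a+b-1 satisfying x₁ + x₂ ≡ a+b-2 (mod a+1) is exactly Y₁ ∪ Z₁, where Y₁ = { (a + (b-1)/2 - m, a + (b-1)/2 + m) : 0 ≤ m ≤ (b-1)/2 } and Z₁ = { ((a+b)/2 - 1 - m, (a+b)/2 - 1 + m) : 0 ≤ m ≤ (a-b)/2 }. -/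
/-- For `a, b` both odd with `1 ≤ b ≤ a`, the solutions of
`x₁ + x₂ ≡ a+b-2 (mod a+1)` with `b-1 ≤ x₁ ≤ x₂ ≤ a+b-1` are exactly `Y₁ ∪ Z₁`. -/
theorem stmt_11 (a b : ℤ) (ha : 1 ≤ a) (hb1 : 1 ≤ b) (hba : b ≤ a)
    (hao : Odd a) (hbo : Odd b) :
    {p : ℤ × ℤ | b - 1 ≤ p.1 ∧ p.1 ≤ p.2 ∧ p.2 ≤ a + b - 1 ∧
        p.1 + p.2 ≡ a + b - 2 [ZMOD a + 1]} =
      {p : ℤ × ℤ | ∃ m : ℤ, 0 ≤ m ∧ m ≤ (b - 1) / 2 ∧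
        p = (a + (b - 1) / 2 - m, a + (b - 1) / 2 + m)} ∪
      {p : ℤ × ℤ | ∃ m : ℤ, 0 ≤ m ∧ m ≤ (a - b) / 2 ∧
        p = ((a + b) / 2 - 1 - m, (a + b) / 2 - 1 + m)} := by
  obtain ⟨a', rfl⟩ := hao
  obtain ⟨b', rfl⟩ := hbo
  ext ⟨x, y⟩
  simp only [Set.mem_setOf_eq, Set.mem_union, Prod.mk.injEq, Prod.ext_iff]
  constructor
  · rintro ⟨h1, h2, h3, h4⟩
    obtain ⟨k, hk⟩ := h4.dvd
    have hk1 : k ≤ 0 := by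
      by_contra h
      push_neg at h
      nlinarith [mul_le_mul_of_nonneg_left h (show (0:ℤ) ≤ 2*a'+1+1 by linarith)]
    have hk0 : -1 ≤ k := by
      by_contra h
      push_neg at h
      have h' : k ≤ -2 := by linarith
      nlinarith [mul_le_mul_of_nonneg_left h' (show (0:ℤ) ≤ 2*a'+1+1 by linarith)]
    interval_cases k
    · left
      exact ⟨y - ((2*a'+1) + ((2*b'+1) - 1) / 2), by omega, by omega, by omega, by omega⟩
    · right
      exact ⟨y - (((2*a'+1) + (2*b'+1)) / 2 - 1), by omega, by omega, by omega, by omega⟩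
  · rintro (⟨m, hm0, hm1, hx, hy⟩ | ⟨m, hm0, hm1, hx, hy⟩)
    · refine ⟨by omega, by omega, by omega, ?_⟩
      have : ((2*a'+1) + 1) ∣ ((2*a'+1) + (2*b'+1) - 2) - (x + y) := ⟨-1, by omega⟩
      exact (Int.modEq_iff_dvd.mpr this)
    · refine ⟨by omega, by omega, by omega, ?_⟩
      have : ((2*a'+1) + 1) ∣ ((2*a'+1) + (2*b'+1) - 2) - (x + y) := ⟨0, by omega⟩
      exact (Int.modEq_iff_dvd.mpr this)
end

section
/- Let a ≥ 2 and 1 ≤ b ≤ a with a and b both even. The set of pairs (x₁,x₂) of integers with b-1 ≤ x₁ ≤ x₂ ≤ a+b-1 and x₁ + x₂ ≡ a+b-2 (mod a+1) is exactly Y₂ ∪ Z₁, where Y₂ = { (a + (b-2)/2 - m, a + b/2 + m) : 0 ≤ m ≤ (b-2)/2 } and Z₁ = { ((a+b)/2 - 1 - m, (a+b)/2 - 1 + m) : 0 ≤ m ≤ (a-b)/2 }. -/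
/-- For `a, b` both even with `1 ≤ b ≤ a`, the solutions of
`x₁ + x₂ ≡ a+b-2 (mod a+1)` with `b-1 ≤ x₁ ≤ x₂ ≤ a+b-1` are exactly `Y₂ ∪ Z₁`. -/
theorem stmt_12 (a b : ℤ) (ha : 2 ≤ a) (hb1 : 1 ≤ b) (hba : b ≤ a)
    (hae : Even a) (hbe : Even b) :
    {p : ℤ × ℤ | b - 1 ≤ p.1 ∧ p.1 ≤ p.2 ∧ p.2 ≤ a + b - 1 ∧
        p.1 + p.2 ≡ a + b - 2 [ZMOD a + 1]} =
      {p : ℤ × ℤ | ∃ m : ℤ, 0 ≤ m ∧ m ≤ (b - 2) / 2 ∧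
        p = (a + (b - 2) / 2 - m, a + b / 2 + m)} ∪
      {p : ℤ × ℤ | ∃ m : ℤ, 0 ≤ m ∧ m ≤ (a - b) / 2 ∧
        p = ((a + b) / 2 - 1 - m, (a + b) / 2 - 1 + m)} := by
  obtain ⟨u, hu⟩ := hae
  obtain ⟨v, hv⟩ := hbe
  ext ⟨x, y⟩
  simp only [Set.mem_setOf_eq, Set.mem_union, Prod.mk.injEq, Int.modEq_iff_dvd]
  constructor
  · rintro ⟨h1, h2, h3, k, hk⟩
    have hk0 : -1 ≤ k := by nlinarith
    have hk1 : k ≤ 0 := by nlinarith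
    interval_cases k
    · -- sum = 2a+b-1
      left
      exact ⟨y - (a + b / 2), by omega, by omega, by omega, by omega⟩
    · -- sum = a+b-2
      right
      exact ⟨y - ((a + b) / 2 - 1), by omega, by omega, by omega, by omega⟩
  · rintro (⟨m, hm0, hm1, hx, hy⟩ | ⟨m, hm0, hm1, hx, hy⟩)
    · exact ⟨by omega, by omega, by omega, -1, by omega⟩
    · exact ⟨by omega, by omega, by omega, 0, by omega⟩
end

section
/- Let a,b be integers with a+b ≥ 2 and b > 0, and let Row be rowmotion on the ν-Dyck lattice with ν = EᵃNE^bN given by: Row(x,y) = (a+b,a) if x=y=0; (y+b-1, y-1) if x=0, y>0; (x-1,a) if (y=0, x>0) or x=y+b; (x-1,y-1) otherwise. Then for a+1 ≤ x ≤ a+b-1, Row^{a+1}(x,a) = (x-(a+1), a); and Row^{a+2}(a,a) = (a+b-1, a). -/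
/-!
On the strip `y ≤ x < y + b` away from the axes, rowmotion is the diagonal step
`(x, y) ↦ (x - 1, y - 1)`, so `a` steps carry `(x, a)` to `(x - a, 0)`. From the bottom row one
more step returns to row `a`; for `x = a` the walk passes through `(0, 0)` and the top element
`(a + b, a)` first, which costs the extra step.
-/

/-- Rowmotion on the ν-Dyck lattice for `ν = EᵃNE^bN`, with `(a + b, a)` encoding the top element. -/
def nuDyckRow (a b : ℤ) (p : ℤ × ℤ) : ℤ × ℤ :=
  if p.1 = 0 ∧ p.2 = 0 then (a + b, a)
  else if p.1 = 0 then (p.2 + b - 1, p.2 - 1)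
  else if p.2 = 0 ∨ p.1 = p.2 + b then (p.1 - 1, a)
  else (p.1 - 1, p.2 - 1)

namespace nuDyckRow

variable {a b : ℤ}

theorem zero_zero : nuDyckRow a b (0, 0) = (a + b, a) := by
  simp [nuDyckRow]

theorem of_snd_eq_zero {x : ℤ} (hx : x ≠ 0) : nuDyckRow a b (x, 0) = (x - 1, a) := by
  simp [nuDyckRow, hx]

theorem add_self {y : ℤ} (hy : y + b ≠ 0) : nuDyckRow a b (y + b, y) = (y + b - 1, a) := by
  simp [nuDyckRow, hy]

theorem of_ne {x y : ℤ} (hx : x ≠ 0) (hy : y ≠ 0) (hxy : x ≠ y + b) :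
    nuDyckRow a b (x, y) = (x - 1, y - 1) := by
  simp [nuDyckRow, hx, hy, hxy]

theorem iterate_of_le {x y : ℤ} (hxy : y ≤ x) (hxb : x < y + b) {j : ℕ} (hj : (j : ℤ) ≤ y) :
    (nuDyckRow a b)^[j] (x, y) = (x - j, y - j) := by
  induction j with
  | zero => simp
  | succ j ih =>
    push_cast at hj ⊢
    rw [Function.iterate_succ_apply', ih (by omega),
      of_ne (by omega) (by omega) (by omega)]
    ext <;> simp only <;> ring

theorem iterate_snd {x y : ℕ} (hxy : y ≤ x) (hxb : (x : ℤ) < y + b) :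
    (nuDyckRow a b)^[y] ((x : ℤ), (y : ℤ)) = ((x : ℤ) - y, 0) := by
  rw [iterate_of_le (by omega) hxb le_rfl, sub_self]

end nuDyckRow

theorem stmt_14_general (a b : ℕ) (hb : 0 < b) :
    let Row : ℤ × ℤ → ℤ × ℤ := fun p =>
      if p.1 = 0 ∧ p.2 = 0 then ((a : ℤ) + b, (a : ℤ))
      else if p.1 = 0 then (p.2 + b - 1, p.2 - 1)
      else if p.2 = 0 ∨ p.1 = p.2 + b then (p.1 - 1, (a : ℤ))
      else (p.1 - 1, p.2 - 1)
    (∀ x : ℕ, a + 1 ≤ x → x ≤ a + b - 1 →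
      Row^[a + 1] ((x : ℤ), (a : ℤ)) = ((x : ℤ) - ((a : ℤ) + 1), (a : ℤ))) ∧
    Row^[a + 2] ((a : ℤ), (a : ℤ)) = ((a : ℤ) + b - 1, (a : ℤ)) := by
  intro Row
  rw [show Row = nuDyckRow a b from rfl]
  constructor
  · intro x hax hxb
    rw [Function.iterate_succ_apply', nuDyckRow.iterate_snd (by omega) (by omega),
      nuDyckRow.of_snd_eq_zero (by omega), sub_sub]
  · rw [Function.iterate_succ_apply', Function.iterate_succ_apply',
      nuDyckRow.iterate_snd le_rfl (by omega), sub_self, nuDyckRow.zero_zero,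
      nuDyckRow.add_self (by omega)]

/-- For rowmotion on the ν-Dyck lattice with ν = EᵃNE^bN (`b > 0`):
`Row^{a+1}(x,a) = (x-(a+1), a)` for `a+1 ≤ x ≤ a+b-1`, and
`Row^{a+2}(a,a) = (a+b-1, a)`. -/
theorem stmt_14 (a b : ℕ) (hab : 2 ≤ a + b) (hb : 0 < b) :
    let Row : ℤ × ℤ → ℤ × ℤ := fun p =>
      if p.1 = 0 ∧ p.2 = 0 then ((a : ℤ) + b, (a : ℤ))
      else if p.1 = 0 then (p.2 + b - 1, p.2 - 1)
      else if p.2 = 0 ∨ p.1 = p.2 + b then (p.1 - 1, (a : ℤ))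
      else (p.1 - 1, p.2 - 1)
    (∀ x : ℕ, a + 1 ≤ x → x ≤ a + b - 1 →
      Row^[a + 1] ((x : ℤ), (a : ℤ)) = ((x : ℤ) - ((a : ℤ) + 1), (a : ℤ))) ∧
    Row^[a + 2] ((a : ℤ), (a : ℤ)) = ((a : ℤ) + b - 1, (a : ℤ)) :=
  stmt_14_general a b hb
end

section
/- Let a,b be integers with a+b ≥ 2 and b > 0, and let Row be the rowmotion map on the ν-Dyck lattice with ν = EᵃNE^bN as above. Then two elements (x₁,a) and (x₂,a) with 0 ≤ x₁,x₂ ≤ a+b-1 lie in the same Row-orbit if and only if x₁ + x₂ ≡ a+b-2 (mod a+1) or x₁ ≡ x₂ (mod a+1). -/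
namespace Stmt15

def row (a b : ℕ) : ℤ × ℤ → ℤ × ℤ := fun p =>
  if p.1 = 0 ∧ p.2 = 0 then ((a : ℤ) + b, (a : ℤ))
  else if p.1 = 0 then (p.2 + b - 1, p.2 - 1)
  else if p.2 = 0 ∨ p.1 = p.2 + b then (p.1 - 1, (a : ℤ))
  else (p.1 - 1, p.2 - 1)

lemma row_apply (a b : ℕ) (x y : ℤ) : row a b (x, y) =
    if x = 0 ∧ y = 0 then ((a : ℤ) + b, (a : ℤ))
    else if x = 0 then (y + b - 1, y - 1)
    else if y = 0 ∨ x = y + b then (x - 1, (a : ℤ))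
    else (x - 1, y - 1) := rfl

def inP (a b : ℕ) (p : ℤ × ℤ) : Prop :=
  0 ≤ p.2 ∧ p.2 ≤ a ∧ 0 ≤ p.1 ∧ p.1 ≤ p.2 + b

def dd (a b : ℕ) (p : ℤ × ℤ) : ZMod (a + 1) :=
  if p.1 = p.2 + b then ((p.1 - 1 - a : ℤ) : ZMod (a + 1))
  else ((p.1 - p.2 : ℤ) : ZMod (a + 1))

lemma dd_apply (a b : ℕ) (x y : ℤ) : dd a b (x, y) =
    if x = y + b then ((x - 1 - a : ℤ) : ZMod (a + 1))
    else ((x - y : ℤ) : ZMod (a + 1)) := rfl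

lemma keyz (a : ℕ) : ((a : ZMod (a + 1)) + 1) = 0 := by
  have h := ZMod.natCast_self (a + 1)
  push_cast at h
  linear_combination h

lemma row_mem (a b : ℕ) (hb : 0 < b) {p : ℤ × ℤ} (hp : inP a b p) : inP a b (row a b p) := by
  obtain ⟨x, y⟩ := p
  obtain ⟨h1, h2, h3, h4⟩ := hp
  simp only [inP] at *
  rw [row_apply]
  split_ifs <;> dsimp only <;> omega

lemma dd_step (a b : ℕ) (hb : 0 < b) {p : ℤ × ℤ} (hp : inP a b p) :
    dd a b (row a b p) = dd a b p ∨
      dd a b (row a b p) = (b : ZMod (a + 1)) - 1 - dd a b p := by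
  obtain ⟨x, y⟩ := p
  obtain ⟨h1, h2, h3, h4⟩ := hp
  simp only [inP] at *
  rw [row_apply]
  simp only [apply_ite (dd a b), dd_apply]
  split_ifs
  all_goals try casesm* _ ∧ _, _ ∨ _
  all_goals subst_vars
  all_goals try (exfalso; omega)
  all_goals
    first
    | (left; push_cast; ring1)
    | (right; push_cast; ring1)
    | (left; push_cast; linear_combination keyz a)
    | (left; push_cast; linear_combination -keyz a)
    | (right; push_cast; linear_combination keyz a)
    | (right; push_cast; linear_combination -keyz a)

lemma dd_iter (a b : ℕ) (hb : 0 < b) {p : ℤ × ℤ} (hp : inP a b p) (k : ℕ) :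
    inP a b ((row a b)^[k] p) ∧
      (dd a b ((row a b)^[k] p) = dd a b p ∨
        dd a b ((row a b)^[k] p) = (b : ZMod (a + 1)) - 1 - dd a b p) := by
  induction k with
  | zero => exact ⟨hp, Or.inl rfl⟩
  | succ k ih =>
    obtain ⟨hmem, hd⟩ := ih
    rw [Function.iterate_succ_apply']
    refine ⟨row_mem a b hb hmem, ?_⟩
    rcases dd_step a b hb hmem with h | h <;> rcases hd with h' | h'
    · exact Or.inl (by rw [h, h'])
    · exact Or.inr (by rw [h, h'])
    · exact Or.inr (by rw [h, h'])
    · exact Or.inl (by rw [h, h']; ring)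

lemma forward (a b : ℕ) (hab : 2 ≤ a + b) (hb : 0 < b) {x y : ℕ}
    (hx : x ≤ a + b - 1) (hy : y ≤ a + b - 1)
    (h : ∃ k, (row a b)^[k] ((x : ℤ), (a : ℤ)) = ((y : ℤ), (a : ℤ))) :
    (x : ℤ) + y ≡ (a : ℤ) + b - 2 [ZMOD (a : ℤ) + 1] ∨
      (x : ℤ) ≡ (y : ℤ) [ZMOD (a : ℤ) + 1] := by
  obtain ⟨k, hk⟩ := h
  have hx' : inP a b ((x : ℤ), (a : ℤ)) := by
    simp only [inP]; omega
  have hdd := (dd_iter a b hb hx' k).2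
  rw [hk] at hdd
  have e1 : dd a b ((x : ℤ), (a : ℤ)) = (((x : ℤ) - a : ℤ) : ZMod (a + 1)) := by
    rw [dd_apply, if_neg (by omega)]
  have e2 : dd a b ((y : ℤ), (a : ℤ)) = (((y : ℤ) - a : ℤ) : ZMod (a + 1)) := by
    rw [dd_apply, if_neg (by omega)]
  rw [e1, e2] at hdd
  have hmod : ((a : ℤ) + 1) = ((a + 1 : ℕ) : ℤ) := by push_cast; ring
  rw [hmod]
  rcases hdd with h | h
  · right
    rw [← ZMod.intCast_eq_intCast_iff]
    push_cast at h ⊢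
    linear_combination -h
  · left
    rw [← ZMod.intCast_eq_intCast_iff]
    push_cast at h ⊢
    linear_combination h + keyz a

lemma diag (a b : ℕ) {x : ℕ} (hx : x < a + b) :
    ∀ k : ℕ, k ≤ x → k ≤ a →
      (row a b)^[k] ((x : ℤ), (a : ℤ)) = ((x : ℤ) - k, (a : ℤ) - k) := by
  intro k
  induction k with
  | zero => simp
  | succ k ih =>
    intro hk1 hk2
    rw [Function.iterate_succ_apply', ih (by omega) (by omega), row_apply]
    rw [if_neg (by omega), if_neg (by omega), if_neg (by omega)]
    simp only [Prod.mk.injEq]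
    constructor <;> push_cast <;> ring

def ff (a b : ℕ) : ℕ → ℕ := fun x =>
  if x < a then a + b - 2 - x else if x = a then a + b - 1 else x - (a + 1)

lemma ff_lt (a b : ℕ) (hab : 2 ≤ a + b) (hb : 0 < b) {x : ℕ} (hx : x < a + b) :
    ff a b x < a + b := by
  simp only [ff]; split_ifs <;> omega

lemma iter_two (f : ℤ × ℤ → ℤ × ℤ) (p : ℤ × ℤ) : f^[2] p = f (f p) := by
  rw [show (2:ℕ) = 1 + 1 from rfl, Function.iterate_add_apply, Function.iterate_one]

lemma ff_step (a b : ℕ) (hab : 2 ≤ a + b) (hb : 0 < b) {x : ℕ} (hx : x < a + b) :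
    ∃ c, (row a b)^[c] ((x : ℤ), (a : ℤ)) = ((ff a b x : ℤ), (a : ℤ)) := by
  rcases lt_trichotomy x a with h | h | h
  · -- x < a
    refine ⟨2 + x, ?_⟩
    have hd : (row a b)^[x] ((x : ℤ), (a : ℤ)) = (0, (a : ℤ) - x) := by
      rw [diag a b hx x le_rfl (by omega)]
      simp only [Prod.mk.injEq]
      constructor <;> first | omega | trivial
    have s1 : row a b ((0 : ℤ), (a : ℤ) - x) = ((a : ℤ) - x + b - 1, (a : ℤ) - x - 1) := by
      rw [row_apply, if_neg (by omega), if_pos rfl]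
    have s2 : row a b ((a : ℤ) - x + b - 1, (a : ℤ) - x - 1) =
        ((a : ℤ) - x + b - 1 - 1, (a : ℤ)) := by
      rw [row_apply, if_neg (by omega), if_neg (by omega), if_pos (by omega)]
    have hf : ff a b x = a + b - 2 - x := by simp only [ff]; rw [if_pos h]
    rw [Function.iterate_add_apply, hd, iter_two, s1, s2, hf]
    simp only [Prod.mk.injEq]
    constructor <;> first | omega | trivial
  · -- x = a
    refine ⟨2 + x, ?_⟩
    have hd : (row a b)^[x] ((x : ℤ), (a : ℤ)) = (0, 0) := by
      rw [diag a b hx x le_rfl (by omega)]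
      simp only [Prod.mk.injEq]
      constructor <;> first | omega | trivial
    have s1 : row a b ((0 : ℤ), (0 : ℤ)) = ((a : ℤ) + b, (a : ℤ)) := by
      rw [row_apply, if_pos ⟨rfl, rfl⟩]
    have s2 : row a b ((a : ℤ) + b, (a : ℤ)) = ((a : ℤ) + b - 1, (a : ℤ)) := by
      rw [row_apply, if_neg (by omega), if_neg (by omega), if_pos (by omega)]
    have hf : ff a b x = a + b - 1 := by
      simp only [ff]; rw [if_neg (by omega), if_pos h]
    rw [Function.iterate_add_apply, hd, iter_two, s1, s2, hf]
    simp only [Prod.mk.injEq]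
    constructor <;> first | omega | trivial
  · -- x > a
    refine ⟨1 + a, ?_⟩
    have hd : (row a b)^[a] ((x : ℤ), (a : ℤ)) = ((x : ℤ) - a, 0) := by
      rw [diag a b hx a (by omega) le_rfl]
      simp only [Prod.mk.injEq]
      constructor <;> first | omega | trivial
    have s1 : row a b ((x : ℤ) - a, (0 : ℤ)) = ((x : ℤ) - a - 1, (a : ℤ)) := by
      rw [row_apply, if_neg (by omega), if_neg (by omega), if_pos (by omega)]
    have hf : ff a b x = x - (a + 1) := by
      simp only [ff]; rw [if_neg (by omega), if_neg (by omega)]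
    rw [Function.iterate_add_apply, hd, Function.iterate_one, s1, hf]
    simp only [Prod.mk.injEq]
    constructor <;> first | omega | trivial

lemma ff_iter_lt (a b : ℕ) (hab : 2 ≤ a + b) (hb : 0 < b) {x : ℕ} (hx : x < a + b) (n : ℕ) :
    (ff a b)^[n] x < a + b := by
  induction n with
  | zero => simpa using hx
  | succ n ih => rw [Function.iterate_succ_apply']; exact ff_lt a b hab hb ih

lemma ff_inj (a b : ℕ) (hab : 2 ≤ a + b) (hb : 0 < b) {u v : ℕ} (hu : u < a + b)
    (hv : v < a + b) (h : ff a b u = ff a b v) : u = v := by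
  simp only [ff] at h
  split_ifs at h <;> omega

lemma ff_cancel (a b : ℕ) (hab : 2 ≤ a + b) (hb : 0 < b) {x : ℕ} (hx : x < a + b) :
    ∀ i d : ℕ, (ff a b)^[i + d] x = (ff a b)^[i] x → (ff a b)^[d] x = x := by
  intro i
  induction i with
  | zero => intro d h; simpa using h
  | succ i ih =>
    intro d h
    rw [show i + 1 + d = (i + d) + 1 from by omega, Function.iterate_succ_apply',
      Function.iterate_succ_apply'] at h
    exact ih d (ff_inj a b hab hb (ff_iter_lt a b hab hb hx _) (ff_iter_lt a b hab hb hx _) h)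

lemma ff_period (a b : ℕ) (hab : 2 ≤ a + b) (hb : 0 < b) {x : ℕ} (hx : x < a + b) :
    ∃ p, 0 < p ∧ (ff a b)^[p] x = x := by
  have hmaps : ∀ i ∈ Finset.range (a + b + 1), (ff a b)^[i] x ∈ Finset.range (a + b) := by
    intro i _
    exact Finset.mem_range.mpr (ff_iter_lt a b hab hb hx i)
  obtain ⟨i, hi, j, hj, hij, heq⟩ :=
    Finset.exists_ne_map_eq_of_card_lt_of_maps_to (by simp) hmaps
  rcases lt_or_gt_of_ne hij with hlt | hlt
  · exact ⟨j - i, by omega, ff_cancel a b hab hb hx i (j - i)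
      (by rw [show i + (j - i) = j from by omega]; exact heq.symm)⟩
  · exact ⟨i - j, by omega, ff_cancel a b hab hb hx j (i - j)
      (by rw [show j + (i - j) = i from by omega]; exact heq)⟩

def Reach (a b : ℕ) (u v : ℕ) : Prop := ∃ n, (ff a b)^[n] u = v

lemma reach_refl (a b u : ℕ) : Reach a b u u := ⟨0, rfl⟩

lemma reach_trans {a b u v w : ℕ} (h1 : Reach a b u v) (h2 : Reach a b v w) :
    Reach a b u w := by
  obtain ⟨n, hn⟩ := h1
  obtain ⟨m, hm⟩ := h2
  exact ⟨m + n, by rw [Function.iterate_add_apply, hn, hm]⟩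

lemma reach_inv (a b : ℕ) (hab : 2 ≤ a + b) (hb : 0 < b) {x y : ℕ} (hx : x < a + b)
    (h : Reach a b x y) : Reach a b y x := by
  obtain ⟨n, hn⟩ := h
  obtain ⟨p, hp, hfix⟩ := ff_period a b hab hb hx
  refine ⟨n * p - n, ?_⟩
  rw [← hn, ← Function.iterate_add_apply, show n * p - n + n = n * p from by
    have := Nat.le_mul_of_pos_right n hp; omega, mul_comm,
    Function.iterate_mul]
  exact Function.iterate_fixed hfix n

lemma reach_mod (a b : ℕ) (hab : 2 ≤ a + b) (hb : 0 < b) :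
    ∀ x, Reach a b x (x % (a + 1)) := by
  intro x
  induction x using Nat.strong_induction_on with
  | _ x ih =>
    rcases le_or_gt x a with h | h
    · rw [Nat.mod_eq_of_lt (by omega)]; exact reach_refl a b x
    · have h1 : ff a b x = x - (a + 1) := by
        simp only [ff]; rw [if_neg (by omega), if_neg (by omega)]
      have h2 := ih (x - (a + 1)) (by omega)
      have h3 : (x - (a + 1)) % (a + 1) = x % (a + 1) := by
        conv_rhs => rw [show x = (x - (a + 1)) + (a + 1) from by omega]
        rw [Nat.add_mod_right]
      rw [h3] at h2
      exact reach_trans ⟨1, by simpa using h1⟩ h2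

lemma reach_of_mod_eq (a b : ℕ) (hab : 2 ≤ a + b) (hb : 0 < b) {u v : ℕ} (hu : u < a + b)
    (hv : v < a + b) (h : u % (a + 1) = v % (a + 1)) : Reach a b u v := by
  have h1 := reach_mod a b hab hb u
  have h2 := reach_mod a b hab hb v
  rw [← h] at h2
  exact reach_trans h1 (reach_inv a b hab hb hv h2)

lemma lift_reach (a b : ℕ) (hab : 2 ≤ a + b) (hb : 0 < b) {x y : ℕ} (hx : x < a + b)
    (h : Reach a b x y) :
    ∃ k, (row a b)^[k] ((x : ℤ), (a : ℤ)) = ((y : ℤ), (a : ℤ)) := by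
  obtain ⟨n, hn⟩ := h
  induction n generalizing x with
  | zero => exact ⟨0, by simp [← hn]⟩
  | succ n ih =>
    have hfx := ff_lt a b hab hb hx
    obtain ⟨c, hc⟩ := ff_step a b hab hb hx
    obtain ⟨k, hk⟩ := ih hfx (by rw [← Function.iterate_succ_apply]; exact hn)
    exact ⟨k + c, by rw [Function.iterate_add_apply, hc, hk]⟩

lemma backward (a b : ℕ) (hab : 2 ≤ a + b) (hb : 0 < b) {x y : ℕ}
    (hx : x < a + b) (hy : y < a + b)
    (h : (x : ℤ) + y ≡ (a : ℤ) + b - 2 [ZMOD (a : ℤ) + 1] ∨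
      (x : ℤ) ≡ (y : ℤ) [ZMOD (a : ℤ) + 1]) :
    ∃ k, (row a b)^[k] ((x : ℤ), (a : ℤ)) = ((y : ℤ), (a : ℤ)) := by
  have hmod : ((a : ℤ) + 1) = ((a + 1 : ℕ) : ℤ) := by push_cast; ring
  rw [hmod] at h
  rcases h with h | h
  · -- sum case
    set r := x % (a + 1) with hr
    have hrlt : r < a + 1 := Nat.mod_lt _ (by omega)
    have hrab : r < a + b := by omega
    have h1 : Reach a b x r := reach_mod a b hab hb x
    have h2 : Reach a b r (ff a b r) := ⟨1, by simp⟩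
    have htlt : ff a b r < a + b := ff_lt a b hab hb hrab
    have hkey : (ff a b r) % (a + 1) = y % (a + 1) := by
      rw [← ZMod.natCast_eq_natCast_iff']
      have hz : ((x : ZMod (a + 1)) + y) = (a : ZMod (a + 1)) + b - 2 := by
        have h' := (ZMod.intCast_eq_intCast_iff _ _ _).mpr h
        push_cast at h'
        linear_combination h'
      have hrz : (r : ZMod (a + 1)) = (x : ZMod (a + 1)) := by
        rw [ZMod.natCast_eq_natCast_iff']
        exact Nat.mod_mod_of_dvd x dvd_rfl
      rcases lt_or_ge r a with hra | hra
      · have hfr : ff a b r + r + 2 = a + b := by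
          simp only [ff]; rw [if_pos hra]; omega
        have hfz : ((ff a b r : ZMod (a + 1)) + r + 2) = (a : ZMod (a + 1)) + b := by
          exact_mod_cast congrArg (Nat.cast : ℕ → ZMod (a + 1)) hfr
        linear_combination hfz - hz - hrz
      · have hra' : r = a := by omega
        have hfr : ff a b r + 1 = a + b := by
          simp only [ff]; rw [if_neg (by omega), if_pos hra']; omega
        have hfz : ((ff a b r : ZMod (a + 1)) + 1) = (a : ZMod (a + 1)) + b := by
          exact_mod_cast congrArg (Nat.cast : ℕ → ZMod (a + 1)) hfr
        rw [hra'] at hrz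
        linear_combination hfz - hz - hrz + keyz a
    have h3 : Reach a b (ff a b r) y := reach_of_mod_eq a b hab hb htlt hy hkey
    exact lift_reach a b hab hb hx (reach_trans h1 (reach_trans h2 h3))
  · -- diff case
    have hxy : x % (a + 1) = y % (a + 1) := by
      have h2 : (((x : ℤ)) : ZMod (a + 1)) = (((y : ℤ)) : ZMod (a + 1)) :=
        (ZMod.intCast_eq_intCast_iff _ _ _).mpr h
      rw [Int.cast_natCast, Int.cast_natCast] at h2
      exact (ZMod.natCast_eq_natCast_iff' _ _ _).mp h2
    exact lift_reach a b hab hb hx (reach_of_mod_eq a b hab hb hx hy hxy)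

end Stmt15

/-- Two elements `(x₁,a)` and `(x₂,a)` with `0 ≤ x₁,x₂ ≤ a+b-1` lie in the same
rowmotion orbit of the ν-Dyck lattice with ν = EᵃNE^bN (`b > 0`) iff
`x₁ + x₂ ≡ a+b-2 (mod a+1)` or `x₁ ≡ x₂ (mod a+1)`. -/
theorem stmt_15 (a b : ℕ) (hab : 2 ≤ a + b) (hb : 0 < b) :
    let Row : ℤ × ℤ → ℤ × ℤ := fun p =>
      if p.1 = 0 ∧ p.2 = 0 then ((a : ℤ) + b, (a : ℤ))
      else if p.1 = 0 then (p.2 + b - 1, p.2 - 1)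
      else if p.2 = 0 ∨ p.1 = p.2 + b then (p.1 - 1, (a : ℤ))
      else (p.1 - 1, p.2 - 1)
    ∀ x₁ x₂ : ℕ, x₁ ≤ a + b - 1 → x₂ ≤ a + b - 1 →
      (((∃ k : ℕ, Row^[k] ((x₁ : ℤ), (a : ℤ)) = ((x₂ : ℤ), (a : ℤ))) ∨
        (∃ k : ℕ, Row^[k] ((x₂ : ℤ), (a : ℤ)) = ((x₁ : ℤ), (a : ℤ)))) ↔
      ((x₁ : ℤ) + x₂ ≡ (a : ℤ) + b - 2 [ZMOD (a : ℤ) + 1] ∨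
        (x₁ : ℤ) ≡ (x₂ : ℤ) [ZMOD (a : ℤ) + 1])) := by
  intro Row x₁ x₂ h₁ h₂
  have hR : Row = Stmt15.row a b := rfl
  constructor
  · rintro (h | h)
    · rw [hR] at h
      exact Stmt15.forward a b hab hb h₁ h₂ h
    · rw [hR] at h
      rcases Stmt15.forward a b hab hb h₂ h₁ h with h' | h'
      · left
        rwa [show (x₂ : ℤ) + x₁ = (x₁ : ℤ) + x₂ from by ring] at h'
      · right
        exact h'.symm
  · intro h
    left
    rw [hR]
    exact Stmt15.backward a b hab hb (by omega) (by omega) h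
end

section
/- Let a,b be integers with a+b ≥ 2 and b > 0, and let Row be rowmotion on the ν-Dyck lattice with ν = EᵃNE^bN. Then every Row-orbit contains either one or two elements of the form (x,a) with b-1 ≤ x ≤ a+b-1. -/
namespace Stmt16

def Rw (a b : ℕ) : ℤ × ℤ → ℤ × ℤ := fun p =>
  if p.1 = 0 ∧ p.2 = 0 then ((a : ℤ) + b, (a : ℤ))
  else if p.1 = 0 then (p.2 + b - 1, p.2 - 1)
  else if p.2 = 0 ∨ p.1 = p.2 + b then (p.1 - 1, (a : ℤ))
  else (p.1 - 1, p.2 - 1)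

def Nx (a b : ℕ) (x : ℤ) : ℤ :=
  if x < a then a + b - 2 - x
  else if x = a then a + b
  else if x = a + b then a + b - 1
  else x - a - 1

def cf (a b : ℕ) (x : ℤ) : ℤ :=
  if x = (a:ℤ) + b then min ((a:ℤ) % ((a:ℤ) + 1)) (((b:ℤ) - 3 - a) % ((a:ℤ) + 1))
  else min (x % ((a:ℤ) + 1)) (((b:ℤ) - 3 - x) % ((a:ℤ) + 1))

lemma Rw_eval (a b : ℕ) (x y : ℤ) : Rw a b (x, y) =
    if x = 0 ∧ y = 0 then ((a : ℤ) + b, (a : ℤ))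
    else if x = 0 then (y + b - 1, y - 1)
    else if y = 0 ∨ x = y + b then (x - 1, (a : ℤ))
    else (x - 1, y - 1) := rfl

lemma Rw_00 (a b : ℕ) : Rw a b (0, 0) = ((a:ℤ) + b, (a:ℤ)) := by
  rw [Rw_eval]; simp

lemma Rw_0y (a b : ℕ) (y : ℤ) (hy : y ≠ 0) : Rw a b (0, y) = (y + b - 1, y - 1) := by
  rw [Rw_eval, if_neg (by tauto), if_pos rfl]

lemma Rw_toA (a b : ℕ) (x y : ℤ) (hx : x ≠ 0) (h : y = 0 ∨ x = y + b) :
    Rw a b (x, y) = (x - 1, (a:ℤ)) := by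
  rw [Rw_eval, if_neg (by tauto), if_neg hx, if_pos h]

lemma Rw_diag1 (a b : ℕ) (x y : ℤ) (hx : x ≠ 0) (hy : y ≠ 0) (h : x ≠ y + b) :
    Rw a b (x, y) = (x - 1, y - 1) := by
  rw [Rw_eval, if_neg (by tauto), if_neg hx, if_neg (by tauto)]

lemma L_diag (a b : ℕ) : ∀ (k : ℕ) (x y : ℤ), (k:ℤ) ≤ x → (k:ℤ) ≤ y → x < y + b →
    (Rw a b)^[k] (x, y) = (x - k, y - k) := by
  intro k
  induction k with
  | zero => intro x y _ _ _; simp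
  | succ k ih =>
    intro x y hx hy hxy
    have hk : ((k+1:ℕ):ℤ) = (k:ℤ) + 1 := by push_cast; ring
    rw [Function.iterate_succ_apply,
      Rw_diag1 a b x y (by omega) (by omega) (by omega),
      ih (x-1) (y-1) (by omega) (by omega) (by omega)]
    rw [Prod.mk.injEq]; constructor <;> push_cast <;> ring


lemma L_step (a b : ℕ) (hb : 0 < b) (x : ℤ) (hx0 : 0 ≤ x) (hx1 : x ≤ (a:ℤ) + b) :
    ∃ m : ℕ, 0 < m ∧ (Rw a b)^[m] (x, (a:ℤ)) = (Nx a b x, (a:ℤ)) ∧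
      ∀ j : ℕ, 0 < j → j < m → ((Rw a b)^[j] (x, (a:ℤ))).2 ≠ (a:ℤ) := by
  rcases lt_trichotomy x (a:ℤ) with hlt | heq | hgt
  · -- x < a
    have hcast : ((x.toNat : ℕ) : ℤ) = x := Int.toNat_of_nonneg hx0
    have hdiag : (Rw a b)^[x.toNat] (x, (a:ℤ)) = (0, (a:ℤ) - x) := by
      rw [L_diag a b x.toNat x (a:ℤ) (by omega) (by omega) (by omega)]
      rw [Prod.mk.injEq]; omega
    have e1 : (Rw a b)^[x.toNat + 1] (x, (a:ℤ)) = ((a:ℤ) - x + b - 1, (a:ℤ) - x - 1) := by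
      rw [Function.iterate_succ_apply', hdiag, Rw_0y a b _ (by omega)]
    have e2 : (Rw a b)^[x.toNat + 2] (x, (a:ℤ)) = ((a:ℤ) + b - 2 - x, (a:ℤ)) := by
      have : x.toNat + 2 = (x.toNat + 1) + 1 := rfl
      rw [this, Function.iterate_succ_apply', e1,
        Rw_toA a b _ _ (by omega) (Or.inr (by ring))]
      rw [Prod.mk.injEq]; omega
    refine ⟨x.toNat + 2, by omega, ?_, ?_⟩
    · rw [e2]; rw [Nx, if_pos hlt]
    · intro j hj0 hj1
      rcases Nat.lt_or_ge j (x.toNat + 1) with hj | hj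
      · rw [L_diag a b j x (a:ℤ) (by omega) (by omega) (by omega)]
        simp only; omega
      · have : j = x.toNat + 1 := by omega
        rw [this, e1]; simp only; omega
  · -- x = a
    subst heq  -- replaces? x = a: heq : x = a, subst gives x := a... heq : x = ↑a so subst x
    refine ⟨a + 1, by omega, ?_, ?_⟩
    · have hdiag : (Rw a b)^[a] (((a:ℤ)), (a:ℤ)) = (0, 0) := by
        rw [L_diag a b a (a:ℤ) (a:ℤ) (by omega) (by omega) (by omega)]
        rw [Prod.mk.injEq]; omega
      rw [Function.iterate_succ_apply', hdiag, Rw_00]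
      rw [Nx, if_neg (by omega), if_pos rfl]
    · intro j hj0 hj1
      rw [L_diag a b j (a:ℤ) (a:ℤ) (by omega) (by omega) (by omega)]
      simp only; omega
  · -- x > a
    rcases eq_or_lt_of_le hx1 with heq | hlt
    · -- x = a + b
      refine ⟨1, by omega, ?_, by omega⟩
      rw [Function.iterate_one, Rw_toA a b _ _ (by omega) (Or.inr (by omega)),
        Nx, if_neg (by omega), if_neg (by omega), if_pos heq]
      rw [Prod.mk.injEq]; omega
    · -- a < x < a + b
      have hdiag : (Rw a b)^[a] (x, (a:ℤ)) = (x - a, 0) := by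
        rw [L_diag a b a x (a:ℤ) (by omega) (by omega) (by omega)]
        rw [Prod.mk.injEq]; omega
      refine ⟨a + 1, by omega, ?_, ?_⟩
      · rw [Function.iterate_succ_apply', hdiag, Rw_toA a b _ _ (by omega) (Or.inl rfl),
          Nx, if_neg (by omega), if_neg (by omega), if_neg (by omega)]
      · intro j hj0 hj1
        rw [L_diag a b j x (a:ℤ) (by omega) (by omega) (by omega)]
        simp only; omega


lemma L_Dinv (a b : ℕ) (hb : 0 < b) (x : ℤ) (hx0 : 0 ≤ x) (hx1 : x ≤ (a:ℤ) + b) :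
    0 ≤ Nx a b x ∧ Nx a b x ≤ (a:ℤ) + b := by
  unfold Nx; split_ifs <;> omega

lemma L_DinvIter (a b : ℕ) (hb : 0 < b) : ∀ (j : ℕ) (x : ℤ), 0 ≤ x → x ≤ (a:ℤ) + b →
    0 ≤ (Nx a b)^[j] x ∧ (Nx a b)^[j] x ≤ (a:ℤ) + b := by
  intro j
  induction j with
  | zero => intro x h0 h1; simpa using ⟨h0, h1⟩
  | succ j ih =>
    intro x h0 h1
    rw [Function.iterate_succ_apply]
    obtain ⟨g0, g1⟩ := L_Dinv a b hb x h0 h1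
    exact ih _ g0 g1

lemma L_inj (a b : ℕ) (hb : 0 < b) (x y : ℤ) (hx0 : 0 ≤ x) (hx1 : x ≤ (a:ℤ) + b)
    (hy0 : 0 ≤ y) (hy1 : y ≤ (a:ℤ) + b) (h : Nx a b x = Nx a b y) : x = y := by
  unfold Nx at h; split_ifs at h <;> omega

lemma L_cancel (a b : ℕ) (hb : 0 < b) : ∀ (i : ℕ) (x y : ℤ), 0 ≤ x → x ≤ (a:ℤ) + b →
    0 ≤ y → y ≤ (a:ℤ) + b → (Nx a b)^[i] x = (Nx a b)^[i] y → x = y := by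
  intro i
  induction i with
  | zero => intro x y _ _ _ _ h; simpa using h
  | succ i ih =>
    intro x y hx0 hx1 hy0 hy1 h
    rw [Function.iterate_succ_apply, Function.iterate_succ_apply] at h
    obtain ⟨gx0, gx1⟩ := L_Dinv a b hb x hx0 hx1
    obtain ⟨gy0, gy1⟩ := L_Dinv a b hb y hy0 hy1
    exact L_inj a b hb x y hx0 hx1 hy0 hy1 (ih _ _ gx0 gx1 gy0 gy1 h)

lemma L_period (a b : ℕ) (hb : 0 < b) (x : ℤ) (hx0 : 0 ≤ x) (hx1 : x ≤ (a:ℤ) + b) :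
    ∃ n : ℕ, 0 < n ∧ (Nx a b)^[n] x = x := by
  have hmap : ∀ j : ℕ, j ∈ Finset.range (a+b+2) →
      (Nx a b)^[j] x ∈ Finset.Icc (0:ℤ) ((a:ℤ)+b) := by
    intro j _
    exact Finset.mem_Icc.2 (L_DinvIter a b hb j x hx0 hx1)
  have hcard : (Finset.Icc (0:ℤ) ((a:ℤ)+b)).card < (Finset.range (a+b+2)).card := by
    rw [Int.card_Icc, Finset.card_range]; omega
  obtain ⟨i, hi, j, hj, hij, heq⟩ :=
    Finset.exists_ne_map_eq_of_card_lt_of_maps_to hcard hmap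
  rcases Nat.lt_or_ge i j with h | h
  · refine ⟨j - i, by omega, ?_⟩
    have h2 : (Nx a b)^[i + (j - i)] x = (Nx a b)^[i] ((Nx a b)^[j-i] x) :=
      Function.iterate_add_apply _ _ _ _
    rw [show i + (j - i) = j from by omega] at h2
    obtain ⟨g0, g1⟩ := L_DinvIter a b hb (j-i) x hx0 hx1
    exact L_cancel a b hb i _ _ g0 g1 hx0 hx1 (by rw [← h2, ← heq])
  · have hlt : j < i := by omega
    refine ⟨i - j, by omega, ?_⟩
    have h2 : (Nx a b)^[j + (i - j)] x = (Nx a b)^[j] ((Nx a b)^[i-j] x) :=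
      Function.iterate_add_apply _ _ _ _
    rw [show j + (i - j) = i from by omega] at h2
    obtain ⟨g0, g1⟩ := L_DinvIter a b hb (i-j) x hx0 hx1
    exact L_cancel a b hb j _ _ g0 g1 hx0 hx1 (by rw [← h2, heq])

lemma L_compose (a b : ℕ) (hb : 0 < b) (x : ℤ) (hx0 : 0 ≤ x) (hx1 : x ≤ (a:ℤ) + b) :
    ∀ j : ℕ, ∃ m : ℕ, j ≤ m ∧ (Rw a b)^[m] (x, (a:ℤ)) = ((Nx a b)^[j] x, (a:ℤ)) := by
  intro j
  induction j with
  | zero => exact ⟨0, le_refl _, by simp⟩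
  | succ j ih =>
    obtain ⟨m, hm, he⟩ := ih
    obtain ⟨g0, g1⟩ := L_DinvIter a b hb j x hx0 hx1
    obtain ⟨m₀, hm₀, hstep, _⟩ := L_step a b hb _ g0 g1
    refine ⟨m₀ + m, by omega, ?_⟩
    rw [Function.iterate_add_apply, he, hstep, Function.iterate_succ_apply']

lemma L_reach (a b : ℕ) (hb : 0 < b) : ∀ (m : ℕ) (x z : ℤ), 0 ≤ x → x ≤ (a:ℤ) + b →
    (Rw a b)^[m] (x, (a:ℤ)) = (z, (a:ℤ)) → ∃ j : ℕ, (Nx a b)^[j] x = z := by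
  intro m
  induction m using Nat.strong_induction_on with
  | _ m ih =>
    intro x z hx0 hx1 hm
    rcases Nat.eq_zero_or_pos m with rfl | hmpos
    · exact ⟨0, by simpa using (Prod.ext_iff.1 hm).1⟩
    · obtain ⟨m₀, hm₀pos, hstep, hinter⟩ := L_step a b hb x hx0 hx1
      by_cases hltm : m < m₀
      · exact absurd (by rw [hm]) (hinter m hmpos hltm)
      · push_neg at hltm
        have h2 : (Rw a b)^[m - m₀] ((Nx a b x), (a:ℤ)) = (z, (a:ℤ)) := by
          have h3 : (Rw a b)^[(m - m₀) + m₀] (x, (a:ℤ)) =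
              (Rw a b)^[m - m₀] ((Rw a b)^[m₀] (x, (a:ℤ))) :=
            Function.iterate_add_apply _ _ _ _
          rw [show (m - m₀) + m₀ = m from by omega, hstep] at h3
          rw [← h3]; exact hm
        obtain ⟨g0, g1⟩ := L_Dinv a b hb x hx0 hx1
        obtain ⟨j, hj⟩ := ih (m - m₀) (by omega) (Nx a b x) z g0 g1 h2
        exact ⟨j + 1, by rw [Function.iterate_succ_apply, hj]⟩


lemma L_toT (a b : ℕ) (hb : 0 < b) : ∀ (n : ℕ), (n:ℤ) ≤ (a:ℤ) + b →
    ∃ j : ℕ, (b:ℤ) - 1 ≤ (Nx a b)^[j] (n:ℤ) ∧ (Nx a b)^[j] (n:ℤ) ≤ (a:ℤ) + b - 1 := by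
  intro n
  induction n using Nat.strong_induction_on with
  | _ n ih =>
    intro hn
    by_cases hT : (b:ℤ) - 1 ≤ (n:ℤ) ∧ (n:ℤ) ≤ (a:ℤ) + b - 1
    · exact ⟨0, by simpa using hT⟩
    · push_neg at hT
      by_cases htop : (n:ℤ) = (a:ℤ) + b
      · refine ⟨1, ?_⟩
        have h1 : Nx a b (n:ℤ) = (a:ℤ) + b - 1 := by
          unfold Nx; split_ifs <;> omega
        rw [Function.iterate_one, h1]; omega
      · -- n ≤ b - 2
        have hsmall : (n:ℤ) ≤ (b:ℤ) - 2 := by omega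
        rcases lt_trichotomy ((n:ℤ)) ((a:ℤ)) with hlt | heq | hgt
        · refine ⟨1, ?_⟩
          have h1 : Nx a b (n:ℤ) = (a:ℤ) + b - 2 - n := by
            unfold Nx; split_ifs <;> omega
          rw [Function.iterate_one, h1]; omega
        · refine ⟨2, ?_⟩
          have h1 : Nx a b (n:ℤ) = (a:ℤ) + b := by
            unfold Nx; split_ifs <;> omega
          have h2 : Nx a b ((a:ℤ) + b) = (a:ℤ) + b - 1 := by
            unfold Nx; split_ifs <;> omega
          show (b:ℤ) - 1 ≤ Nx a b (Nx a b (n:ℤ)) ∧ Nx a b (Nx a b (n:ℤ)) ≤ (a:ℤ) + b - 1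
          rw [h1, h2]; omega
        · -- n > a : recurse on n - (a+1)
          have h1 : Nx a b (n:ℤ) = ((n - (a+1) : ℕ) : ℤ) := by
            unfold Nx; split_ifs <;> push_cast <;> omega
          obtain ⟨j, hj1, hj2⟩ := ih (n - (a+1)) (by omega) (by push_cast; omega)
          refine ⟨j + 1, ?_, ?_⟩ <;>
            rw [Function.iterate_succ_apply, h1] <;> [exact hj1; exact hj2]

lemma L_entry (a b : ℕ) (hb : 0 < b) (p : ℤ × ℤ) (h1 : 0 ≤ p.2) (h2 : p.2 ≤ (a:ℤ))
    (h3 : 0 ≤ p.1) (h4 : p.1 ≤ p.2 + b) :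
    ∃ (k : ℕ) (x₀ : ℤ), 0 ≤ x₀ ∧ x₀ ≤ (a:ℤ) + b ∧ (Rw a b)^[k] p = (x₀, (a:ℤ)) := by
  obtain ⟨x, y⟩ := p
  simp only at h1 h2 h3 h4
  by_cases hy : y = (a:ℤ)
  · exact ⟨0, x, h3, by omega, by rw [hy]; simp⟩
  · have hyA : y < (a:ℤ) := lt_of_le_of_ne h2 hy
    by_cases hwall : x = y + b
    · refine ⟨1, x - 1, by omega, by omega, ?_⟩
      rw [Function.iterate_one, Rw_toA a b x y (by omega) (Or.inr hwall)]
    · have hxlt : x < y + b := by omega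
      rcases le_or_gt x y with hxy | hxy
      · have hdiag : (Rw a b)^[x.toNat] (x, y) = (0, y - x) := by
          rw [L_diag a b x.toNat x y (by omega) (by omega) (by omega)]
          rw [Prod.mk.injEq]; omega
        rcases eq_or_lt_of_le hxy with heq | hlt2
        · refine ⟨x.toNat + 1, (a:ℤ) + b, by omega, by omega, ?_⟩
          rw [Function.iterate_succ_apply', hdiag, show y - x = 0 from by omega, Rw_00]
        · refine ⟨x.toNat + 2, y - x + b - 2, by omega, by omega, ?_⟩
          have e1 : (Rw a b)^[x.toNat + 1] (x, y) = (y - x + b - 1, y - x - 1) := by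
            rw [Function.iterate_succ_apply', hdiag, Rw_0y a b _ (by omega)]
          rw [show x.toNat + 2 = (x.toNat + 1) + 1 from rfl,
            Function.iterate_succ_apply', e1,
            Rw_toA a b _ _ (by omega) (Or.inr (by ring))]
          rw [Prod.mk.injEq]; omega
      · have hdiag : (Rw a b)^[y.toNat] (x, y) = (x - y, 0) := by
          rw [L_diag a b y.toNat x y (by omega) (by omega) (by omega)]
          rw [Prod.mk.injEq]; omega
        refine ⟨y.toNat + 1, x - y - 1, by omega, by omega, ?_⟩
        rw [Function.iterate_succ_apply', hdiag, Rw_toA a b _ _ (by omega) (Or.inl rfl)]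


lemma L_uniq (a : ℕ) (u v : ℤ) (hu0 : 0 ≤ u) (hu1 : u ≤ (a:ℤ)) (hv0 : 0 ≤ v)
    (hv1 : v ≤ (a:ℤ)) (h : ((a:ℤ) + 1) ∣ (u - v)) : u = v := by
  obtain ⟨c, hc⟩ := h
  have hM : (0:ℤ) < (a:ℤ) + 1 := by omega
  have h1 : c < 1 := by
    by_contra h
    push_neg at h
    nlinarith
  have h2 : (-1:ℤ) < c := by
    by_contra h
    push_neg at h
    nlinarith
  have hc0 : c = 0 := by omega
  rw [hc0, mul_zero] at hc
  omega

lemma L_cN (a b : ℕ) (hb : 0 < b) (x : ℤ) (hx0 : 0 ≤ x) (hx1 : x ≤ (a:ℤ) + b) :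
    cf a b (Nx a b x) = cf a b x := by
  have hM : ((a:ℤ) + 1) ≠ 0 := by omega
  unfold Nx
  split_ifs with h1 h2 h3
  · -- x < a : Nx x = a+b-2-x
    unfold cf
    rw [if_neg (by omega), if_neg (by omega)]
    have e1 : ((a:ℤ) + b - 2 - x) % ((a:ℤ)+1) = ((b:ℤ) - 3 - x) % ((a:ℤ)+1) := by
      rw [show (a:ℤ) + b - 2 - x = ((b:ℤ) - 3 - x) + ((a:ℤ)+1) * 1 from by ring,
        Int.add_mul_emod_self_left]
    have e2 : ((b:ℤ) - 3 - ((a:ℤ) + b - 2 - x)) % ((a:ℤ)+1) = x % ((a:ℤ)+1) := by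
      rw [show (b:ℤ) - 3 - ((a:ℤ) + b - 2 - x) = x + ((a:ℤ)+1) * (-1) from by ring,
        Int.add_mul_emod_self_left]
    rw [e1, e2, min_comm]
  · -- x = a : Nx x = a+b
    unfold cf
    rw [if_pos rfl, if_neg (by omega), h2]
  · -- x = a+b : Nx x = a+b-1
    unfold cf
    rw [if_neg (by omega), if_pos h3]
    have e1 : ((a:ℤ) + b - 1) % ((a:ℤ)+1) = ((b:ℤ) - 2) % ((a:ℤ)+1) := by
      rw [show (a:ℤ) + b - 1 = ((b:ℤ) - 2) + ((a:ℤ)+1) * 1 from by ring,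
        Int.add_mul_emod_self_left]
    have e2 : ((b:ℤ) - 3 - ((a:ℤ) + b - 1)) % ((a:ℤ)+1) = (a:ℤ) % ((a:ℤ)+1) := by
      rw [show (b:ℤ) - 3 - ((a:ℤ) + b - 1) = (a:ℤ) + ((a:ℤ)+1) * (-2) from by ring,
        Int.add_mul_emod_self_left]
    have e3 : ((b:ℤ) - 3 - (a:ℤ)) % ((a:ℤ)+1) = ((b:ℤ) - 2) % ((a:ℤ)+1) := by
      rw [show (b:ℤ) - 3 - (a:ℤ) = ((b:ℤ) - 2) + ((a:ℤ)+1) * (-1) from by ring,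
        Int.add_mul_emod_self_left]
    rw [e1, e2, e3, min_comm]
  · -- a < x < a+b : Nx x = x-a-1
    unfold cf
    rw [if_neg (by omega), if_neg (by omega)]
    have e1 : (x - (a:ℤ) - 1) % ((a:ℤ)+1) = x % ((a:ℤ)+1) := by
      rw [show x - (a:ℤ) - 1 = x + ((a:ℤ)+1) * (-1) from by ring,
        Int.add_mul_emod_self_left]
    have e2 : ((b:ℤ) - 3 - (x - (a:ℤ) - 1)) % ((a:ℤ)+1) = ((b:ℤ) - 3 - x) % ((a:ℤ)+1) := by
      rw [show (b:ℤ) - 3 - (x - (a:ℤ) - 1) = ((b:ℤ) - 3 - x) + ((a:ℤ)+1) * 1 from by ring,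
        Int.add_mul_emod_self_left]
    rw [e1, e2]

lemma L_cN_iter (a b : ℕ) (hb : 0 < b) : ∀ (j : ℕ) (x : ℤ), 0 ≤ x → x ≤ (a:ℤ) + b →
    cf a b ((Nx a b)^[j] x) = cf a b x := by
  intro j
  induction j with
  | zero => intro x _ _; simp
  | succ j ih =>
    intro x h0 h1
    rw [Function.iterate_succ_apply]
    obtain ⟨g0, g1⟩ := L_Dinv a b hb x h0 h1
    rw [ih _ g0 g1, L_cN a b hb x h0 h1]

lemma L_fiber (a b : ℕ) (hb : 0 < b) (x y : ℤ)
    (hx1 : (b:ℤ) - 1 ≤ x) (hx2 : x ≤ (a:ℤ) + b - 1)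
    (hy1 : (b:ℤ) - 1 ≤ y) (hy2 : y ≤ (a:ℤ) + b - 1)
    (h : cf a b x = cf a b y) :
    x = y ∨ x = (b:ℤ) - 1 + (-2 - y) % ((a:ℤ) + 1) := by
  have hM : (0:ℤ) < (a:ℤ) + 1 := by omega
  have hM' : ((a:ℤ) + 1) ≠ 0 := by omega
  unfold cf at h
  rw [if_neg (by omega), if_neg (by omega)] at h
  have key : ((a:ℤ)+1) ∣ (x - y) ∨ ((a:ℤ)+1) ∣ (x + y - ((b:ℤ) - 3)) := by
    rcases min_cases (x % ((a:ℤ)+1)) (((b:ℤ) - 3 - x) % ((a:ℤ)+1)) with ⟨e1, _⟩ | ⟨e1, _⟩ <;>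
      rcases min_cases (y % ((a:ℤ)+1)) (((b:ℤ) - 3 - y) % ((a:ℤ)+1)) with ⟨e2, _⟩ | ⟨e2, _⟩ <;>
      rw [e1, e2] at h
    · left
      exact Int.dvd_of_emod_eq_zero (Int.emod_eq_emod_iff_emod_sub_eq_zero.mp h)
    · right
      have hd := Int.emod_eq_emod_iff_emod_sub_eq_zero.mp h
      have := Int.dvd_of_emod_eq_zero hd
      rw [show x - ((b:ℤ) - 3 - y) = x + y - ((b:ℤ) - 3) from by ring] at this
      exact this
    · right
      have hd := Int.emod_eq_emod_iff_emod_sub_eq_zero.mp h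
      have h3 := Int.dvd_of_emod_eq_zero hd
      have : x + y - ((b:ℤ) - 3) = -(((b:ℤ) - 3 - x) - y) := by ring
      rw [this]
      exact dvd_neg.mpr h3
    · left
      have hd := Int.emod_eq_emod_iff_emod_sub_eq_zero.mp h
      have h3 := Int.dvd_of_emod_eq_zero hd
      have : x - y = -(((b:ℤ) - 3 - x) - ((b:ℤ) - 3 - y)) := by ring
      rw [this]
      exact dvd_neg.mpr h3
  rcases key with hd | hd
  · left
    have := L_uniq a (x - ((b:ℤ)-1)) (y - ((b:ℤ)-1)) (by omega) (by omega) (by omega)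
      (by omega) (by rw [show x - ((b:ℤ)-1) - (y - ((b:ℤ)-1)) = x - y from by ring]; exact hd)
    omega
  · right
    set r := (-2 - y) % ((a:ℤ) + 1) with hr
    have hr0 : 0 ≤ r := Int.emod_nonneg _ hM'
    have hr1 : r < (a:ℤ) + 1 := Int.emod_lt_of_pos _ hM
    have hd2 : ((a:ℤ)+1) ∣ ((-2 - y) - r) := by
      have hdef : (-2 - y) % ((a:ℤ)+1) = -2 - y - ((a:ℤ)+1) * ((-2 - y) / ((a:ℤ)+1)) :=
        Int.emod_def _ _
      rw [hr, hdef]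
      exact ⟨(-2 - y) / ((a:ℤ)+1), by ring⟩
    have hd3 : ((a:ℤ)+1) ∣ (x - ((b:ℤ) - 1 + r)) := by
      have : x - ((b:ℤ) - 1 + r) = (x + y - ((b:ℤ) - 3)) + ((-2 - y) - r) := by ring
      rw [this]
      exact dvd_add hd hd2
    have := L_uniq a (x - ((b:ℤ)-1)) r (by omega) (by omega) hr0 (by omega)
      (by rw [show x - ((b:ℤ)-1) - r = x - ((b:ℤ) - 1 + r) from by ring]; exact hd3)
    omega


end Stmt16

open Stmt16 in
/-- Every rowmotion orbit of the ν-Dyck lattice with ν = EᵃNE^bN (`b > 0`)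
contains either one or two elements of the form `(x,a)` with `b-1 ≤ x ≤ a+b-1`. -/
theorem stmt_16 (a b : ℕ) (hab : 2 ≤ a + b) (hb : 0 < b) :
    let Row : ℤ × ℤ → ℤ × ℤ := fun p =>
      if p.1 = 0 ∧ p.2 = 0 then ((a : ℤ) + b, (a : ℤ))
      else if p.1 = 0 then (p.2 + b - 1, p.2 - 1)
      else if p.2 = 0 ∨ p.1 = p.2 + b then (p.1 - 1, (a : ℤ))
      else (p.1 - 1, p.2 - 1)
    ∀ p : ℤ × ℤ, 0 ≤ p.2 → p.2 ≤ (a : ℤ) → 0 ≤ p.1 → p.1 ≤ p.2 + b →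
      ({x : ℤ | (b : ℤ) - 1 ≤ x ∧ x ≤ (a : ℤ) + b - 1 ∧
          ((∃ k : ℕ, Row^[k] p = (x, (a : ℤ))) ∨
            (∃ k : ℕ, Row^[k] (x, (a : ℤ)) = p))}.ncard = 1 ∨
       {x : ℤ | (b : ℤ) - 1 ≤ x ∧ x ≤ (a : ℤ) + b - 1 ∧
          ((∃ k : ℕ, Row^[k] p = (x, (a : ℤ))) ∨
            (∃ k : ℕ, Row^[k] (x, (a : ℤ)) = p))}.ncard = 2) := by
  intro Row p h1 h2 h3 h4
  have hRow : Row = Rw a b := rfl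
  rw [hRow]
  set S := {x : ℤ | (b : ℤ) - 1 ≤ x ∧ x ≤ (a : ℤ) + b - 1 ∧
      ((∃ k : ℕ, (Rw a b)^[k] p = (x, (a : ℤ))) ∨
        (∃ k : ℕ, (Rw a b)^[k] (x, (a : ℤ)) = p))} with hS
  -- entry to row a
  obtain ⟨k₀, x₀, hx₀0, hx₀1, hk₀⟩ := L_entry a b hb p h1 h2 h3 h4
  -- reach the special window T
  have hcast : ((x₀.toNat : ℕ) : ℤ) = x₀ := Int.toNat_of_nonneg hx₀0
  obtain ⟨j₁, hT1, hT2⟩ := L_toT a b hb x₀.toNat (by omega)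
  rw [hcast] at hT1 hT2
  set x₁ := (Nx a b)^[j₁] x₀ with hx₁
  obtain ⟨hx₁0, hx₁1⟩ := L_DinvIter a b hb j₁ x₀ hx₀0 hx₀1
  obtain ⟨m₁, _, hm₁⟩ := L_compose a b hb x₀ hx₀0 hx₀1 j₁
  have hpx₁ : (Rw a b)^[m₁ + k₀] p = (x₁, (a:ℤ)) := by
    rw [Function.iterate_add_apply, hk₀, hm₁]
  -- period of x₁
  obtain ⟨n₁, hn₁pos, hn₁⟩ := L_period a b hb x₁ hx₁0 hx₁1
  obtain ⟨P, hPge, hP⟩ := L_compose a b hb x₁ hx₁0 hx₁1 n₁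
  rw [hn₁] at hP
  have hPpos : 0 < P := by omega
  have hPmul : ∀ c : ℕ, (Rw a b)^[c * P] (x₁, (a:ℤ)) = (x₁, (a:ℤ)) := by
    intro c
    induction c with
    | zero => simp
    | succ c ih =>
      rw [show (c+1) * P = c * P + P from by ring, Function.iterate_add_apply, hP, ih]
  -- the candidate pair
  set z := (b:ℤ) - 1 + (-2 - x₁) % ((a:ℤ) + 1) with hz
  have hmem : x₁ ∈ S := by
    rw [hS]
    exact ⟨hT1, hT2, Or.inl ⟨m₁ + k₀, hpx₁⟩⟩
  have hsub : S ⊆ {x₁, z} := by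
    intro x hx
    rw [hS] at hx
    obtain ⟨hxT1, hxT2, hdisj⟩ := hx
    have hxD0 : 0 ≤ x := by omega
    have hxD1 : x ≤ (a:ℤ) + b := by omega
    have hreach : ∃ l : ℕ, (Nx a b)^[l] x = x₁ := by
      rcases hdisj with ⟨k', hk'⟩ | ⟨k'', hk''⟩
      · set K := k' * P + (m₁ + k₀) with hK
        have hKp : (Rw a b)^[K] p = (x₁, (a:ℤ)) := by
          rw [hK, Function.iterate_add_apply, hpx₁, hPmul k']
        have hK' : k' ≤ K := by
          have : k' * 1 ≤ k' * P := Nat.mul_le_mul_left k' (by omega)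
          omega
        have hfin : (Rw a b)^[K - k'] (x, (a:ℤ)) = (x₁, (a:ℤ)) := by
          have h5 : (Rw a b)^[(K - k') + k'] p = (Rw a b)^[K - k'] ((Rw a b)^[k'] p) :=
            Function.iterate_add_apply _ _ _ _
          rw [show (K - k') + k' = K from by omega, hk'] at h5
          rw [← h5]; exact hKp
        exact L_reach a b hb (K - k') x x₁ hxD0 hxD1 hfin
      · have hfin : (Rw a b)^[(m₁ + k₀) + k''] (x, (a:ℤ)) = (x₁, (a:ℤ)) := by
          rw [Function.iterate_add_apply, hk'', hpx₁]
        exact L_reach a b hb _ x x₁ hxD0 hxD1 hfin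
    obtain ⟨l, hl⟩ := hreach
    have hcf : cf a b x = cf a b x₁ := by
      rw [← hl, L_cN_iter a b hb l x hxD0 hxD1]
    rcases L_fiber a b hb x x₁ hxT1 hxT2 hT1 hT2 hcf with h | h
    · exact Or.inl h
    · exact Or.inr h
  -- conclude
  have hfinpair : ({x₁, z} : Set ℤ).Finite := (Set.finite_singleton z).insert x₁
  have hfin : S.Finite := hfinpair.subset hsub
  have hge : 1 ≤ S.ncard := by
    have : S.Nonempty := ⟨x₁, hmem⟩
    have := Set.ncard_pos hfin |>.mpr this
    omega
  have hle : S.ncard ≤ 2 := by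
    have h6 : S.ncard ≤ ({x₁, z} : Set ℤ).ncard := Set.ncard_le_ncard hsub hfinpair
    have h7 : ({x₁, z} : Set ℤ).ncard ≤ 2 := by
      have := Set.ncard_insert_le x₁ ({z} : Set ℤ)
      simpa using this
    omega
  omega
end

section
/- Let A and B be finite semidistributive lattices, each having the n-switching property: each is embedded in ℤ² so that (0,0),…,(0,n) are elements with (0,i-1) ⋖ (0,i), no element (0,m) for m > n, every cover (c₁,d₁) ⋖ (c₂,d₂) has (c₂-c₁, d₂-d₁) = (0,1) or (m,0) for some m > 0, and two elements with equal second coordinate are comparable exactly by their first coordinates. For 0 ≤ m ≤ n let x_m = max{ i : (i,m) ∈ A }. Then x₀ ≤ x₁ ≤ ⋯ ≤ x_n. -/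
/-- For a finite semidistributive lattice with the `n`-switching property,
the `x`-coordinates of the rightmost elements on the horizontal lines
`y = 0, 1, …, n` are weakly increasing. -/
theorem stmt_19 {α : Type*} [Lattice α] [Fintype α] [DecidableEq α]
    (hSD : ∀ x y z : α, (x ⊓ y = x ⊓ z → x ⊓ (y ⊔ z) = x ⊓ y) ∧
      (x ⊔ y = x ⊔ z → x ⊔ (y ⊓ z) = x ⊔ y))
    (n : ℕ) (e : α ↪ ℕ × ℕ)
    (h0 : ∀ i : ℕ, i ≤ n → ∃ x : α, e x = (0, i))
    (hbd : ∀ x : α, (e x).1 = 0 → (e x).2 ≤ n)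
    (hchain : ∀ i : ℕ, i < n → ∀ x y : α, e x = (0, i) → e y = (0, i + 1) → x ⋖ y)
    (hcov : ∀ x y : α, x ⋖ y →
      ((e y).1 = (e x).1 ∧ (e y).2 = (e x).2 + 1) ∨
      ((e y).2 = (e x).2 ∧ (e x).1 < (e y).1))
    (hcomp : ∀ x y : α, (e x).2 = (e y).2 → (x ≤ y ↔ (e x).1 ≤ (e y).1)) :
    ∀ m₁ m₂ : ℕ, m₁ ≤ m₂ → m₂ ≤ n →
      (Finset.univ.filter fun x : α => (e x).2 = m₁).sup (fun x => (e x).1) ≤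
      (Finset.univ.filter fun x : α => (e x).2 = m₂).sup (fun x => (e x).1) := by
  classical
  haveI : LocallyFiniteOrder α := Fintype.toLocallyFiniteOrder
  have hwf : WellFounded ((· > ·) : α → α → Prop) := IsWellFounded.wf
  -- second coordinate is monotone
  have key : ∀ x y : α, x ≤ y → (e x).2 ≤ (e y).2 := by
    intro x
    induction x using hwf.induction with
    | _ x ih =>
      intro y hxy
      rcases eq_or_lt_of_le hxy with rfl | hlt
      · exact le_refl _
      · obtain ⟨z, hxz, hzy⟩ := exists_covBy_le_of_lt hlt
        have h2 : (e x).2 ≤ (e z).2 := by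
          rcases hcov x z hxz with ⟨_, h2⟩ | ⟨h2, _⟩ <;> omega
        exact h2.trans (ih z hxz.lt y hzy)
  -- step lemma
  have step : ∀ m : ℕ, m + 1 ≤ n →
      (Finset.univ.filter fun x : α => (e x).2 = m).sup (fun x => (e x).1) ≤
      (Finset.univ.filter fun x : α => (e x).2 = m + 1).sup (fun x => (e x).1) := by
    intro m hm
    have aux : ∀ x : α, (e x).2 = m →
        (e x).1 ≤ (Finset.univ.filter fun x : α => (e x).2 = m + 1).sup
          (fun x => (e x).1) := by
      intro x
      induction x using hwf.induction with
      | _ x ih =>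
        intro hx
        obtain ⟨z, hz⟩ := h0 (m + 1) hm
        rcases eq_or_lt_of_le (le_sup_left : x ≤ x ⊔ z) with heq | hlt
        · -- then z ≤ x, contradicting monotonicity of second coordinate
          have hzx : z ≤ x := le_sup_right.trans heq.symm.le
          have := key z x hzx
          rw [hz] at this
          omega
        · obtain ⟨c, hxc, _⟩ := exists_covBy_le_of_lt hlt
          rcases hcov x c hxc with ⟨h1, h2⟩ | ⟨h1, h2⟩
          · have hc : c ∈ Finset.univ.filter fun x : α => (e x).2 = m + 1 := by
              simp [h2, hx]
            calc (e x).1 = (e c).1 := h1.symm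
              _ ≤ _ := Finset.le_sup (f := fun x => (e x).1) hc
          · exact le_of_lt (lt_of_lt_of_le h2 (ih c hxc.lt (by omega)))
    apply Finset.sup_le
    intro x hx
    simp only [Finset.mem_filter] at hx
    exact aux x hx.2
  intro m₁ m₂ h12
  induction m₂, h12 using Nat.le_induction with
  | base => intro _; exact le_refl _
  | succ m hm ih =>
    intro hn
    exact le_trans (ih (by omega)) (step m hn)
end
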